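/- arXiv:2605.12679 — 7 statements merged into one kernel-verified Lean document; each statement's English description precedes it below -/
import Mathlib

section
/- Let L_φ be the Bregman divergence of a differentiable convex function φ. Then the miscalibration term of Murphy's decomposition satisfies E[L_φ(Y, X)] − E[L_φ(Y, E[Y|X])] = E[L_φ(E[Y|X], X)], and in particular this quantity is nonnegative. -/
open MeasureTheory ProbabilityTheory

/-- Bregman divergence of a convex differentiable function is nonnegative. -/
lemma bregman_nonneg (φ : ℝ → ℝ) (hconv : ConvexOn ℝ Set.univ φ)
    (hdiff : Differentiable ℝ φ) (y x : ℝ) :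
    0 ≤ φ y - φ x - deriv φ x * (y - x) := by
  rcases lt_trichotomy x y with h | h | h
  · have := hconv.deriv_le_slope (Set.mem_univ x) (Set.mem_univ y) h (hdiff x)
    rw [slope_def_field] at this
    have hyx : 0 < y - x := by linarith
    nlinarith [(le_div_iff₀ hyx).mp this]
  · subst h; ring_nf; simp
  · have := hconv.slope_le_deriv (Set.mem_univ y) (Set.mem_univ x) h (hdiff x)
    rw [slope_def_field] at this
    have hxy : 0 < x - y := by linarith
    nlinarith [(div_le_iff₀ hxy).mp this]

/-- Murphy miscalibration term equals a pure Bregman score: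
`E[L_φ(Y, X)] − E[L_φ(Y, E[Y|X])] = E[L_φ(E[Y|X], X)] ≥ 0`. -/
theorem murphy_miscalibration_eq_bregman
    {Ω : Type*} {m0 : MeasurableSpace Ω} (μ : Measure Ω) [IsProbabilityMeasure μ]
    (Y X : Ω → ℝ) (hX : Measurable X) (hY : Integrable Y μ)
    (φ : ℝ → ℝ) (hconv : ConvexOn ℝ Set.univ φ) (hdiff : Differentiable ℝ φ)
    (L : ℝ → ℝ → ℝ) (hL : ∀ y x, L y x = φ y - φ x - deriv φ x * (y - x))
    (hφY : Integrable (fun ω => φ (Y ω)) μ)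
    (hφCE : Integrable
      (fun ω => φ ((μ[Y | MeasurableSpace.comap X Real.measurableSpace]) ω)) μ)
    (hφX : Integrable (fun ω => φ (X ω)) μ)
    (h1 : Integrable (fun ω => L (Y ω) (X ω)) μ)
    (h2 : Integrable
      (fun ω => L (Y ω) ((μ[Y | MeasurableSpace.comap X Real.measurableSpace]) ω)) μ)
    (h3 : Integrable
      (fun ω => L ((μ[Y | MeasurableSpace.comap X Real.measurableSpace]) ω) (X ω)) μ) :
    ((∫ ω, L (Y ω) (X ω) ∂μ)
        - ∫ ω, L (Y ω) ((μ[Y | MeasurableSpace.comap X Real.measurableSpace]) ω) ∂μ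
      = ∫ ω, L ((μ[Y | MeasurableSpace.comap X Real.measurableSpace]) ω) (X ω) ∂μ)
    ∧ 0 ≤ (∫ ω, L (Y ω) (X ω) ∂μ)
        - ∫ ω, L (Y ω) ((μ[Y | MeasurableSpace.comap X Real.measurableSpace]) ω) ∂μ := by
  set m := MeasurableSpace.comap X Real.measurableSpace with hm_def
  have hm : m ≤ m0 := hX.comap_le
  set Z : Ω → ℝ := μ[Y | m] with hZ_def
  -- g := deriv φ ∘ Z - deriv φ ∘ X  is m-strongly measurable
  have hderiv_meas : Measurable (deriv φ) := measurable_deriv φ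
  have hZm : StronglyMeasurable[m] Z := stronglyMeasurable_condExp
  have hXm : Measurable[m] X := fun s hs => ⟨s, hs, rfl⟩
  have hgm : StronglyMeasurable[m] (fun ω => deriv φ (Z ω) - deriv φ (X ω)) := by
    exact ((hderiv_meas.comp hZm.measurable).sub
      (hderiv_meas.comp hXm)).stronglyMeasurable
  -- pointwise identity: L(Y,X) - L(Y,Z) - L(Z,X) = g * (Y - Z)
  have hpt : ∀ ω, L (Y ω) (X ω) - L (Y ω) (Z ω) - L (Z ω) (X ω)
      = (deriv φ (Z ω) - deriv φ (X ω)) * (Y ω - Z ω) := by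
    intro ω; simp only [hL]; ring
  have hg_int : Integrable (fun ω => (deriv φ (Z ω) - deriv φ (X ω)) * (Y ω - Z ω)) μ := by
    refine ((h1.sub h2).sub h3).congr (Filter.Eventually.of_forall fun ω => ?_)
    exact hpt ω
  have hYZ_int : Integrable (fun ω => Y ω - Z ω) μ := hY.sub integrable_condExp
  -- the cross term integrates to zero
  have hzero : ∫ ω, (deriv φ (Z ω) - deriv φ (X ω)) * (Y ω - Z ω) ∂μ = 0 := by
    have hce : μ[(fun ω => deriv φ (Z ω) - deriv φ (X ω)) * (fun ω => Y ω - Z ω) | m]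
        =ᵐ[μ] (fun ω => deriv φ (Z ω) - deriv φ (X ω)) * μ[(fun ω => Y ω - Z ω) | m] := by
      refine condExp_mul_of_stronglyMeasurable_left hgm ?_ hYZ_int
      exact hg_int
    have hcond0 : μ[(fun ω => Y ω - Z ω) | m] =ᵐ[μ] 0 := by
      have h1' : μ[(fun ω => Y ω - Z ω) | m] =ᵐ[μ] μ[Y | m] - μ[Z | m] :=
        condExp_sub hY integrable_condExp m
      have h2' : μ[Z | m] =ᵐ[μ] Z := Filter.EventuallyEq.of_eq (condExp_of_stronglyMeasurable hm hZm integrable_condExp)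
      filter_upwards [h1', h2'] with ω hω1 hω2
      rw [hω1, Pi.sub_apply, hω2]
      exact sub_eq_zero.mpr rfl
    have : ∫ ω, ((fun ω => deriv φ (Z ω) - deriv φ (X ω)) * fun ω => Y ω - Z ω) ω ∂μ
        = ∫ ω, (μ[(fun ω => deriv φ (Z ω) - deriv φ (X ω)) * (fun ω => Y ω - Z ω) | m]) ω ∂μ :=
      (integral_condExp hm).symm
    calc ∫ ω, (deriv φ (Z ω) - deriv φ (X ω)) * (Y ω - Z ω) ∂μ
        = ∫ ω, (μ[(fun ω => deriv φ (Z ω) - deriv φ (X ω)) * (fun ω => Y ω - Z ω) | m]) ω ∂μ :=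
          this
      _ = ∫ ω, ((fun ω => deriv φ (Z ω) - deriv φ (X ω)) ω * (μ[(fun ω => Y ω - Z ω) | m]) ω) ∂μ :=
          integral_congr_ae (by filter_upwards [hce] with ω hω; simpa using hω)
      _ = 0 := by
          refine integral_eq_zero_of_ae ?_
          filter_upwards [hcond0] with ω hω
          simp [hω]
  have key : (∫ ω, L (Y ω) (X ω) ∂μ) - (∫ ω, L (Y ω) (Z ω) ∂μ)
      = ∫ ω, L (Z ω) (X ω) ∂μ := by
    have : ∫ ω, (L (Y ω) (X ω) - L (Y ω) (Z ω) - L (Z ω) (X ω)) ∂μ = 0 := by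
      rw [integral_congr_ae (Filter.Eventually.of_forall hpt)]
      exact hzero
    have eA : ∫ ω, (L (Y ω) (X ω) - L (Y ω) (Z ω)) - L (Z ω) (X ω) ∂μ
        = (∫ ω, (L (Y ω) (X ω) - L (Y ω) (Z ω)) ∂μ) - ∫ ω, L (Z ω) (X ω) ∂μ :=
      integral_sub (h1.sub h2) h3
    have eB : ∫ ω, (L (Y ω) (X ω) - L (Y ω) (Z ω)) ∂μ
        = (∫ ω, L (Y ω) (X ω) ∂μ) - ∫ ω, L (Y ω) (Z ω) ∂μ := integral_sub h1 h2
    rw [eA, eB] at this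
    linarith
  refine ⟨key, ?_⟩
  rw [key]
  refine integral_nonneg fun ω => ?_
  rw [hL]
  exact bregman_nonneg φ hconv hdiff _ _
end

section
/- Under assumptions that E[Y]=E[X]>0, both supported on [0,∞), and F_X continuous and strictly increasing with F_X(0)=0: if ABC²(Y,X) := ∫₀¹ (CC_p(Y,X) − LC_p(X))² dp = 0, then E[Y|X] = X almost surely, i.e. X is mean-calibrated for Y. -/
open MeasureTheory ProbabilityTheory

/-- Distribution function of `X` under `μ`. -/
noncomputable def cdf' {Ω : Type*} [MeasurableSpace Ω] (μ : Measure Ω) (X : Ω → ℝ) :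
    ℝ → ℝ :=
  fun t => (μ {ω | X ω ≤ t}).toReal

/-- Generalized inverse (quantile function) of the cdf of `X`. -/
noncomputable def quantile {Ω : Type*} [MeasurableSpace Ω] (μ : Measure Ω) (X : Ω → ℝ)
    (p : ℝ) : ℝ :=
  sInf {x : ℝ | p ≤ cdf' μ X x}

/-- Lorenz curve `LC_p(X) = E[X·1{X ≤ F_X⁻¹(p)}] / E[X]`. -/
noncomputable def LC {Ω : Type*} [MeasurableSpace Ω] (μ : Measure Ω) (X : Ω → ℝ)
    (p : ℝ) : ℝ :=
  (∫ ω in {ω | X ω ≤ quantile μ X p}, X ω ∂μ) / ∫ ω, X ω ∂μ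

/-- Concentration curve `CC_p(Y,X) = E[Y·1{X ≤ F_X⁻¹(p)}] / E[Y]`. -/
noncomputable def CC {Ω : Type*} [MeasurableSpace Ω] (μ : Measure Ω) (Y X : Ω → ℝ)
    (p : ℝ) : ℝ :=
  (∫ ω in {ω | X ω ≤ quantile μ X p}, Y ω ∂μ) / ∫ ω, Y ω ∂μ

section Aux

variable {Ω : Type*} {m0 : MeasurableSpace Ω} (μ : Measure Ω) [IsProbabilityMeasure μ]

/-- Continuity of `t ↦ ∫_{X ≤ t} f dμ` when `X` has an atomless distribution. -/
lemma continuous_setIntegral_Iic {X f : Ω → ℝ} (hX : Measurable X)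
    (hf : Integrable f μ) (hatom : ∀ t : ℝ, μ {ω | X ω = t} = 0) :
    Continuous (fun t : ℝ => ∫ ω in {ω | X ω ≤ t}, f ω ∂μ) := by
  have hms : ∀ t : ℝ, MeasurableSet {ω | X ω ≤ t} := fun t => hX measurableSet_Iic
  rw [continuous_iff_continuousAt]
  intro t₀
  have key : Filter.Tendsto
      (fun t : ℝ => ∫ ω, Set.indicator {ω | X ω ≤ t} f ω ∂μ) (nhds t₀)
      (nhds (∫ ω, Set.indicator {ω | X ω ≤ t₀} f ω ∂μ)) := by
    apply tendsto_integral_filter_of_dominated_convergence (fun ω => ‖f ω‖)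
    · exact Filter.Eventually.of_forall fun t =>
        (hf.aestronglyMeasurable.indicator (hms t))
    · exact Filter.Eventually.of_forall fun t =>
        Filter.Eventually.of_forall fun ω => norm_indicator_le_norm_self f ω
    · exact hf.norm
    · have hne : ∀ᵐ ω ∂μ, X ω ≠ t₀ := by
        have := hatom t₀
        rw [MeasureTheory.ae_iff]
        simpa using this
      filter_upwards [hne] with ω hω
      rcases lt_or_gt_of_ne hω with h | h
      · have hev : ∀ᶠ t in nhds t₀, Set.indicator {ω' | X ω' ≤ t} f ω = f ω := by
          filter_upwards [eventually_gt_nhds h] with t ht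
          exact Set.indicator_of_mem (show ω ∈ {ω' | X ω' ≤ t} from le_of_lt ht) f
        have h0 : Set.indicator {ω' | X ω' ≤ t₀} f ω = f ω :=
          Set.indicator_of_mem (show ω ∈ {ω' | X ω' ≤ t₀} from le_of_lt h) f
        rw [h0]
        exact tendsto_const_nhds.congr' (hev.mono fun t ht => ht.symm)
      · have hev : ∀ᶠ t in nhds t₀, Set.indicator {ω' | X ω' ≤ t} f ω = 0 := by
          filter_upwards [eventually_lt_nhds h] with t ht
          exact Set.indicator_of_notMem (show ω ∉ {ω' | X ω' ≤ t} from not_le.mpr ht) f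
        have h0 : Set.indicator {ω' | X ω' ≤ t₀} f ω = 0 :=
          Set.indicator_of_notMem (show ω ∉ {ω' | X ω' ≤ t₀} from not_le.mpr h) f
        rw [h0]
        exact tendsto_const_nhds.congr' (hev.mono fun t ht => ht.symm)
  have heq : (fun t : ℝ => ∫ ω in {ω | X ω ≤ t}, f ω ∂μ)
      = fun t : ℝ => ∫ ω, Set.indicator {ω | X ω ≤ t} f ω ∂μ := by
    funext t
    rw [integral_indicator (hms t)]
  rw [ContinuousAt, heq]
  convert key using 2
  rw [integral_indicator (hms t₀)]

end Aux

/-- if `ABC²(Y,X) = ∫₀¹ (CC_p − LC_p)² dp = 0` then `X` is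
mean-calibrated for `Y`, i.e. `E[Y|X] = X` a.s. -/
theorem mean_calibrated_of_abc_sq_zero
    {Ω : Type*} {m0 : MeasurableSpace Ω} (μ : Measure Ω) [IsProbabilityMeasure μ]
    (Y X : Ω → ℝ) (hX : Measurable X) (hY : Integrable Y μ) (hXint : Integrable X μ)
    (hY0 : 0 ≤ᵐ[μ] Y) (hX0 : 0 ≤ᵐ[μ] X)
    (hmean : ∫ ω, Y ω ∂μ = ∫ ω, X ω ∂μ) (hpos : 0 < ∫ ω, Y ω ∂μ)
    (hFcont : Continuous (cdf' μ X)) (hFmono : StrictMonoOn (cdf' μ X) (Set.Ici 0))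
    (hF0 : cdf' μ X 0 = 0)
    (habc2 : ∫ p in (0:ℝ)..1, (CC μ Y X p - LC μ X p) ^ 2 = 0) :
    μ[Y | MeasurableSpace.comap X Real.measurableSpace] =ᵐ[μ] X := by
  classical
  set F : ℝ → ℝ := cdf' μ X with hFdef
  set q : ℝ → ℝ := quantile μ X with hqdef
  have hms : ∀ t : ℝ, MeasurableSet {ω | X ω ≤ t} := fun t => hX measurableSet_Iic
  have hμne : ∀ s : Set Ω, μ s ≠ ⊤ := fun s => measure_ne_top μ s
  -- F is (weakly) monotone
  have hFmonoG : Monotone F := by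
    intro a b hab
    exact ENNReal.toReal_mono (hμne _) (measure_mono fun ω (h : X ω ≤ a) => le_trans h hab)
  -- F t ≤ 1 and F t < 1
  have hFle1 : ∀ t, F t ≤ 1 := by
    intro t
    have : μ {ω | X ω ≤ t} ≤ 1 := prob_le_one
    simpa [hFdef, cdf'] using ENNReal.toReal_mono (by norm_num) this
  have hF0le : ∀ t, 0 ≤ F t := fun t => ENNReal.toReal_nonneg
  have hFlt1 : ∀ t, F t < 1 := by
    intro t
    rcases le_or_gt 0 t with h | h
    · exact lt_of_lt_of_le (hFmono (Set.mem_Ici.mpr h)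
        (Set.mem_Ici.mpr (by linarith)) (by linarith)) (hFle1 (t + 1))
    · exact lt_of_le_of_lt (by
        have := hFmonoG (le_of_lt h)
        simpa [hF0] using this) one_pos
  -- μ {X ≤ 0} = 0
  have hμ0 : μ {ω | X ω ≤ 0} = 0 := by
    have h := hF0
    rw [hFdef] at h
    rcases (ENNReal.toReal_eq_zero_iff _).mp h with h' | h'
    · exact h'
    · exact absurd h' (hμne _)
  -- ∀ p < 1, ∃ x, p ≤ F x
  have hexists : ∀ p : ℝ, p < 1 → ∃ x : ℝ, p ≤ F x := by
    intro p hp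
    have hmonoS : Monotone (fun n : ℕ => {ω | X ω ≤ (n : ℝ)}) := by
      intro a b hab ω (h : X ω ≤ (a : ℝ))
      exact le_trans h (by exact_mod_cast hab)
    have hU : (⋃ n : ℕ, {ω | X ω ≤ (n : ℝ)}) = Set.univ := by
      ext ω
      simp only [Set.mem_iUnion, Set.mem_univ, iff_true]
      obtain ⟨n, hn⟩ := exists_nat_ge (X ω)
      exact ⟨n, hn⟩
    have h1 : Filter.Tendsto (fun n : ℕ => μ {ω | X ω ≤ (n : ℝ)}) Filter.atTop
        (nhds (μ Set.univ)) := by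
      have := tendsto_measure_iUnion_atTop (μ := μ) hmonoS
      rwa [hU] at this
    rw [measure_univ] at h1
    have h2 : Filter.Tendsto (fun n : ℕ => F (n : ℝ)) Filter.atTop (nhds 1) := by
      have := (ENNReal.tendsto_toReal (by norm_num : (1 : ENNReal) ≠ ⊤)).comp h1
      simpa [hFdef, cdf', Function.comp_def] using this
    have := h2.eventually (eventually_gt_nhds hp)
    rcases this.exists with ⟨n, hn⟩
    exact ⟨n, le_of_lt hn⟩
  -- atomlessness
  have hatom : ∀ t : ℝ, μ {ω | X ω = t} = 0 := by
    intro t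
    have hltms : MeasurableSet {ω | X ω < t} := hX measurableSet_Iio
    have hUlt : {ω | X ω < t} = ⋃ n : ℕ, {ω | X ω ≤ t - 1 / ((n : ℝ) + 1)} := by
      ext ω
      simp only [Set.mem_setOf_eq, Set.mem_iUnion]
      constructor
      · intro h
        obtain ⟨n, hn⟩ := exists_nat_one_div_lt (show (0:ℝ) < t - X ω by linarith)
        exact ⟨n, by linarith⟩
      · rintro ⟨n, hn⟩
        have : (0:ℝ) < 1 / ((n : ℝ) + 1) := by positivity
        linarith
    have hmonoS : Monotone (fun n : ℕ => {ω | X ω ≤ t - 1 / ((n : ℝ) + 1)}) := by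
      intro a b hab ω (h : X ω ≤ t - 1 / ((a : ℝ) + 1))
      have hab' : (a : ℝ) + 1 ≤ (b : ℝ) + 1 := by exact_mod_cast by omega
      have : 1 / ((b : ℝ) + 1) ≤ 1 / ((a : ℝ) + 1) :=
        one_div_le_one_div_of_le (by positivity) hab'
      simp only [Set.mem_setOf_eq]
      linarith
    have h1 : Filter.Tendsto (fun n : ℕ => μ {ω | X ω ≤ t - 1 / ((n : ℝ) + 1)})
        Filter.atTop (nhds (μ {ω | X ω < t})) := by
      rw [hUlt]
      exact tendsto_measure_iUnion_atTop (μ := μ) hmonoS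
    have h2 : Filter.Tendsto (fun n : ℕ => F (t - 1 / ((n : ℝ) + 1)))
        Filter.atTop (nhds ((μ {ω | X ω < t}).toReal)) := by
      have := (ENNReal.tendsto_toReal (hμne _)).comp h1
      simpa [hFdef, cdf', Function.comp_def] using this
    have h3 : Filter.Tendsto (fun n : ℕ => F (t - 1 / ((n : ℝ) + 1)))
        Filter.atTop (nhds (F t)) := by
      apply (hFcont.tendsto t).comp
      have : Filter.Tendsto (fun n : ℕ => t - 1 / ((n : ℝ) + 1)) Filter.atTop
          (nhds (t - 0)) :=
        tendsto_const_nhds.sub tendsto_one_div_add_atTop_nhds_zero_nat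
      simpa using this
    have heq : (μ {ω | X ω < t}).toReal = F t := tendsto_nhds_unique h2 h3
    have heqm : μ {ω | X ω < t} = μ {ω | X ω ≤ t} := by
      rw [← ENNReal.toReal_eq_toReal_iff' (hμne _) (hμne _)]
      exact heq
    have hsub : {ω | X ω = t} ⊆ {ω | X ω ≤ t} \ {ω | X ω < t} := by
      intro ω h
      simp only [Set.mem_setOf_eq] at h
      exact ⟨le_of_eq h, by simp [h]⟩
    have hsub2 : {ω | X ω < t} ⊆ {ω | X ω ≤ t} := fun ω (hω : X ω < t) => le_of_lt hω
    have hd : μ ({ω | X ω ≤ t} \ {ω | X ω < t})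
        = μ {ω | X ω ≤ t} - μ {ω | X ω < t} :=
      measure_diff hsub2 hltms.nullMeasurableSet (hμne _)
    refine le_antisymm (le_trans (measure_mono hsub) ?_) zero_le
    rw [hd, ← heqm, tsub_self]
  -- continuity of the two set-integral functions
  have hcontY : Continuous (fun t : ℝ => ∫ ω in {ω | X ω ≤ t}, Y ω ∂μ) :=
    continuous_setIntegral_Iic μ hX hY hatom
  have hcontX : Continuous (fun t : ℝ => ∫ ω in {ω | X ω ≤ t}, X ω ∂μ) :=
    continuous_setIntegral_Iic μ hX hXint hatom
  set g : ℝ → ℝ := fun t =>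
    (∫ ω in {ω | X ω ≤ t}, Y ω ∂μ) - ∫ ω in {ω | X ω ≤ t}, X ω ∂μ with hgdef
  have hcontg : Continuous g := hcontY.sub hcontX
  set I : ℝ := ∫ ω, Y ω ∂μ with hIdef
  -- quantile bounds
  have hqb : ∀ a b p : ℝ, 0 ≤ a → F a < p → p ≤ F b → a ≤ q p ∧ q p ≤ b := by
    intro a b p ha hap hpb
    have hbS : b ∈ {x : ℝ | p ≤ F x} := hpb
    have hlb : ∀ x ∈ {x : ℝ | p ≤ F x}, a ≤ x := by
      intro x hx
      by_contra hax
      push_neg at hax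
      exact absurd (le_trans hx (hFmonoG (le_of_lt hax))) (not_le.mpr hap)
    constructor
    · exact le_csInf ⟨b, hbS⟩ hlb
    · exact csInf_le ⟨a, hlb⟩ hbS
  -- CC - LC rewrite
  have hCCLC : ∀ p : ℝ, CC μ Y X p - LC μ X p = g (q p) / I := by
    intro p
    rw [CC, LC, ← hmean, ← hIdef, hgdef]
    ring
  -- the squared difference vanishes a.e. on (0,1)
  have hres : volume.restrict (Set.Ioc (0:ℝ) 1) = volume.restrict (Set.Ioo (0:ℝ) 1) :=
    (Measure.restrict_congr_set Ioo_ae_eq_Ioc).symm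
  have hqmono : MonotoneOn q (Set.Ioo (0:ℝ) 1) := by
    intro p₁ hp₁ p₂ hp₂ h12
    obtain ⟨x₂, hx₂⟩ := hexists p₂ hp₂.2
    have hsub : {x : ℝ | p₂ ≤ F x} ⊆ {x : ℝ | p₁ ≤ F x} := fun x hx => le_trans h12 hx
    have hbdd : BddBelow {x : ℝ | p₁ ≤ F x} := by
      refine ⟨0, fun x hx => ?_⟩
      by_contra hx0
      push_neg at hx0
      have : F x ≤ 0 := by
        have := hFmonoG (le_of_lt hx0)
        simpa [hF0] using this
      exact absurd (le_trans hx this) (not_le.mpr hp₁.1)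
    exact csInf_le_csInf hbdd ⟨x₂, hx₂⟩ hsub
  have hqae : AEMeasurable q (volume.restrict (Set.Ioo (0:ℝ) 1)) :=
    aemeasurable_restrict_of_monotoneOn measurableSet_Ioo hqmono
  have hhae : AEMeasurable (fun p => (CC μ Y X p - LC μ X p) ^ 2)
      (volume.restrict (Set.Ioo (0:ℝ) 1)) := by
    have : AEMeasurable (fun p => (g (q p) / I) ^ 2)
        (volume.restrict (Set.Ioo (0:ℝ) 1)) :=
      (((hcontg.measurable.comp_aemeasurable hqae).div_const I).pow_const 2)
    exact this.congr (Filter.EventuallyEq.of_eq (funext fun p => by rw [hCCLC p]).symm)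
  have hIooFin : IsFiniteMeasure (volume.restrict (Set.Ioo (0:ℝ) 1)) := by
    constructor
    rw [Measure.restrict_apply_univ]
    simp [Real.volume_Ioo]
  have hbound : ∀ t : ℝ, |g t| ≤ (∫ ω, ‖Y ω‖ ∂μ) + ∫ ω, ‖X ω‖ ∂μ := by
    intro t
    have h1 : ‖∫ ω in {ω | X ω ≤ t}, Y ω ∂μ‖ ≤ ∫ ω, ‖Y ω‖ ∂μ :=
      le_trans (norm_integral_le_integral_norm _)
        (setIntegral_le_integral hY.norm (Filter.Eventually.of_forall fun ω => norm_nonneg _))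
    have h2 : ‖∫ ω in {ω | X ω ≤ t}, X ω ∂μ‖ ≤ ∫ ω, ‖X ω‖ ∂μ :=
      le_trans (norm_integral_le_integral_norm _)
        (setIntegral_le_integral hXint.norm (Filter.Eventually.of_forall fun ω => norm_nonneg _))
    rw [hgdef]
    calc |(∫ ω in {ω | X ω ≤ t}, Y ω ∂μ) - ∫ ω in {ω | X ω ≤ t}, X ω ∂μ|
        ≤ |∫ ω in {ω | X ω ≤ t}, Y ω ∂μ| + |∫ ω in {ω | X ω ≤ t}, X ω ∂μ| := abs_sub _ _
      _ ≤ (∫ ω, ‖Y ω‖ ∂μ) + ∫ ω, ‖X ω‖ ∂μ := by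
          exact add_le_add (by simpa using h1) (by simpa using h2)
  have hint : Integrable (fun p => (CC μ Y X p - LC μ X p) ^ 2)
      (volume.restrict (Set.Ioo (0:ℝ) 1)) := by
    haveI := hIooFin
    set C : ℝ := (((∫ ω, ‖Y ω‖ ∂μ) + ∫ ω, ‖X ω‖ ∂μ) / I) ^ 2 with hCdef
    refine Integrable.mono' (integrable_const C) hhae.aestronglyMeasurable
      (Filter.Eventually.of_forall fun p => ?_)
    rw [hCCLC p]
    have hI0 : 0 < I := hpos
    have h1 : |g (q p) / I| ≤ ((∫ ω, ‖Y ω‖ ∂μ) + ∫ ω, ‖X ω‖ ∂μ) / I := by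
      rw [abs_div, abs_of_pos hI0]
      gcongr
      exact hbound _
    calc ‖(g (q p) / I) ^ 2‖ = |g (q p) / I| ^ 2 := by
          rw [Real.norm_eq_abs, ← abs_pow, abs_of_nonneg (sq_nonneg _)] <;> rfl
      _ ≤ C := by
          rw [hCdef]
          exact pow_le_pow_left₀ (abs_nonneg _) h1 2
  have hae0 : ∀ᵐ p ∂(volume.restrict (Set.Ioo (0:ℝ) 1)), g (q p) = 0 := by
    have hzero : ∫ p in Set.Ioo (0:ℝ) 1, (CC μ Y X p - LC μ X p) ^ 2 ∂volume = 0 := by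
      rw [← hres, ← intervalIntegral.integral_of_le (zero_le_one)]
      exact habc2
    have := (integral_eq_zero_iff_of_nonneg_ae
      (Filter.Eventually.of_forall fun p => sq_nonneg _) hint).mp hzero
    filter_upwards [this] with p hp
    have : (CC μ Y X p - LC μ X p) ^ 2 = 0 := hp
    have h1 : CC μ Y X p - LC μ X p = 0 := by
      exact pow_eq_zero_iff (by norm_num) |>.mp this
    rw [hCCLC p] at h1
    have := div_eq_zero_iff.mp h1
    rcases this with h | h
    · exact h
    · exact absurd h (ne_of_gt hpos)
  -- density of zeros
  have hdense : ∀ a b : ℝ, 0 < a → a < b → b < 1 →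
      ∃ p, p ∈ Set.Ioo a b ∧ g (q p) = 0 := by
    intro a b ha hab hb1
    by_contra h
    push_neg at h
    have hsub : Set.Ioo a b ⊆ {p | ¬ g (q p) = 0} := fun p hp => h p hp
    have h0 : volume.restrict (Set.Ioo (0:ℝ) 1) (Set.Ioo a b) = 0 :=
      measure_mono_null hsub (MeasureTheory.ae_iff.mp hae0)
    rw [Measure.restrict_apply measurableSet_Ioo] at h0
    have hsub2 : Set.Ioo a b ∩ Set.Ioo (0:ℝ) 1 = Set.Ioo a b :=
      Set.inter_eq_left.mpr (fun p hp => ⟨lt_trans ha hp.1, lt_trans hp.2 hb1⟩)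
    rw [hsub2, Real.volume_Ioo] at h0
    rw [ENNReal.ofReal_eq_zero] at h0
    linarith
  -- g vanishes on (0, ∞)
  have hg0 : ∀ t : ℝ, 0 < t → g t = 0 := by
    intro t ht
    have hseq : ∀ n : ℕ, ∃ r : ℝ,
        t - t / ((n : ℝ) + 2) ≤ r ∧ r ≤ t + t / ((n : ℝ) + 2) ∧ g r = 0 := by
      intro n
      set δ : ℝ := t / ((n : ℝ) + 2) with hδ
      have hδpos : 0 < δ := by positivity
      have hδlt : δ < t := by
        rw [hδ, div_lt_iff₀ (by positivity)]
        nlinarith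
      have ha0 : 0 < t - δ := by linarith
      have hFa : 0 < F (t - δ) := by
        have := hFmono (Set.mem_Ici.mpr le_rfl) (Set.mem_Ici.mpr (le_of_lt ha0)) ha0
        rwa [hF0] at this
      have hFab : F (t - δ) < F (t + δ) :=
        hFmono (Set.mem_Ici.mpr (le_of_lt ha0))
          (Set.mem_Ici.mpr (by linarith)) (by linarith)
      obtain ⟨p, hp, hgp⟩ := hdense (F (t - δ)) (F (t + δ)) hFa hFab (hFlt1 _)
      obtain ⟨h1, h2⟩ := hqb (t - δ) (t + δ) p (le_of_lt ha0) hp.1 (le_of_lt hp.2)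
      exact ⟨q p, h1, h2, hgp⟩
    choose r hr1 hr2 hr3 using hseq
    have hδtend : Filter.Tendsto (fun n : ℕ => t / ((n : ℝ) + 2)) Filter.atTop (nhds 0) := by
      have h1 := (tendsto_const_div_atTop_nhds_zero_nat t).comp
        (Filter.tendsto_add_atTop_nat 2)
      apply h1.congr
      intro n
      show t / ((n + 2 : ℕ) : ℝ) = t / ((n : ℝ) + 2)
      push_cast
      ring
    have hlow : Filter.Tendsto (fun n : ℕ => t - t / ((n : ℝ) + 2)) Filter.atTop (nhds t) := by
      simpa using Filter.Tendsto.const_sub t hδtend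
    have hhigh : Filter.Tendsto (fun n : ℕ => t + t / ((n : ℝ) + 2)) Filter.atTop (nhds t) := by
      simpa using Filter.Tendsto.const_add t hδtend
    have hlim : Filter.Tendsto r Filter.atTop (nhds t) :=
      tendsto_of_tendsto_of_tendsto_of_le_of_le hlow hhigh hr1 hr2
    have h1 : Filter.Tendsto (fun n => g (r n)) Filter.atTop (nhds (g t)) :=
      (hcontg.tendsto t).comp hlim
    have h2 : Filter.Tendsto (fun n => g (r n)) Filter.atTop (nhds 0) :=
      tendsto_const_nhds.congr (fun n => (hr3 n).symm)
    exact tendsto_nhds_unique h1 h2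
  -- equality of set integrals over {X ≤ t}
  have hgall : ∀ t : ℝ,
      (∫ ω in {ω | X ω ≤ t}, Y ω ∂μ) = ∫ ω in {ω | X ω ≤ t}, X ω ∂μ := by
    intro t
    rcases le_or_gt t 0 with h | h
    · have h0 : μ {ω | X ω ≤ t} = 0 :=
        measure_mono_null (fun ω (hω : X ω ≤ t) => le_trans hω h) hμ0
      rw [Measure.restrict_eq_zero.mpr h0]
      simp
    · have := hg0 t h
      rw [hgdef] at this
      exact sub_eq_zero.mp this
  -- the pushforward measures with densities Y and X agree
  set νY : Measure Ω := μ.withDensity (fun ω => ENNReal.ofReal (Y ω)) with hνYdef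
  set νX : Measure Ω := μ.withDensity (fun ω => ENNReal.ofReal (X ω)) with hνXdef
  haveI : IsFiniteMeasure νY := isFiniteMeasure_withDensity_ofReal hY.2
  haveI : IsFiniteMeasure νX := isFiniteMeasure_withDensity_ofReal hXint.2
  have hsetY : ∀ s : Set Ω, MeasurableSet s →
      νY s = ENNReal.ofReal (∫ ω in s, Y ω ∂μ) := by
    intro s hs
    rw [hνYdef, withDensity_apply _ hs]
    exact (ofReal_integral_eq_lintegral_ofReal hY.integrableOn
      (ae_restrict_of_ae hY0)).symm
  have hsetX : ∀ s : Set Ω, MeasurableSet s →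
      νX s = ENNReal.ofReal (∫ ω in s, X ω ∂μ) := by
    intro s hs
    rw [hνXdef, withDensity_apply _ hs]
    exact (ofReal_integral_eq_lintegral_ofReal hXint.integrableOn
      (ae_restrict_of_ae hX0)).symm
  have hmap : Measure.map X νY = Measure.map X νX := by
    haveI : IsFiniteMeasure (Measure.map X νY) := νY.isFiniteMeasure_map X
    refine Measure.ext_of_Iic _ _ (fun a => ?_)
    rw [Measure.map_apply hX measurableSet_Iic, Measure.map_apply hX measurableSet_Iic]
    have hpre : X ⁻¹' Set.Iic a = {ω | X ω ≤ a} := rfl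
    rw [hpre, hsetY _ (hms a), hsetX _ (hms a), hgall a]
  have hsets : ∀ A : Set ℝ, MeasurableSet A →
      (∫ ω in X ⁻¹' A, X ω ∂μ) = ∫ ω in X ⁻¹' A, Y ω ∂μ := by
    intro A hA
    have h1 : νY (X ⁻¹' A) = νX (X ⁻¹' A) := by
      rw [← Measure.map_apply hX hA, ← Measure.map_apply hX hA, hmap]
    rw [hsetY _ (hX hA), hsetX _ (hX hA)] at h1
    have hY' : 0 ≤ ∫ ω in X ⁻¹' A, Y ω ∂μ :=
      integral_nonneg_of_ae (ae_restrict_of_ae hY0)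
    have hX' : 0 ≤ ∫ ω in X ⁻¹' A, X ω ∂μ :=
      integral_nonneg_of_ae (ae_restrict_of_ae hX0)
    exact ((ENNReal.ofReal_eq_ofReal_iff hY' hX').mp h1).symm
  -- conclude via uniqueness of conditional expectation
  have hm : MeasurableSpace.comap X Real.measurableSpace ≤ m0 := hX.comap_le
  have hXm : Measurable[MeasurableSpace.comap X Real.measurableSpace] X :=
    fun s hs => ⟨s, hs, rfl⟩
  refine (ae_eq_condExp_of_forall_setIntegral_eq hm hY
    (fun s _ _ => hXint.integrableOn) (fun s hs _ => ?_)
    (StronglyMeasurable.aestronglyMeasurable hXm.stronglyMeasurable)).symm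
  obtain ⟨A, hA, rfl⟩ := hs
  exact hsets A hA
end

section
/- Under the same assumptions, ABC²(Y,X) := ∫₀¹ (CC_p − LC_p)² dp admits the representation ABC²(Y,X) = E[(Y−X)(Y'−X')(1 − max{F_X(X), F_X(X')})] / E[Y]², where (Y',X') is an independent copy of (Y,X). -/
open MeasureTheory ProbabilityTheory

section Aux
variable {Ω : Type*} {m0 : MeasurableSpace Ω} (μ : Measure Ω) [IsProbabilityMeasure μ] (X : Ω → ℝ)

lemma cdf'_mono : Monotone (cdf' μ X) := fun _ _ hab =>
  ENNReal.toReal_mono (measure_ne_top μ _) (measure_mono (fun _ h => le_trans h hab))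

omit [IsProbabilityMeasure μ] in
lemma cdf'_nonneg (t : ℝ) : 0 ≤ cdf' μ X t := ENNReal.toReal_nonneg

lemma cdf'_le_one (t : ℝ) : cdf' μ X t ≤ 1 := by
  have h := prob_le_one (μ := μ) (s := {ω | X ω ≤ t})
  simpa [cdf'] using ENNReal.toReal_mono ENNReal.one_ne_top h

lemma quantile_isLeast (hFcont : Continuous (cdf' μ X))
    (hFmono : StrictMonoOn (cdf' μ X) (Set.Ici 0)) (hF0 : cdf' μ X 0 = 0)
    {p : ℝ} (hp : p ∈ Set.Ioo (0:ℝ) 1) :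
    IsLeast {x : ℝ | p ≤ cdf' μ X x} (quantile μ X p) := by
  obtain ⟨n, hn⟩ : ∃ n : ℕ, p ≤ cdf' μ X n := by
    have hmono : Monotone (fun n : ℕ => {ω | X ω ≤ (n:ℝ)}) := by
      intro a b hab ω h
      simp only [Set.mem_setOf_eq] at h ⊢
      exact le_trans h (by exact_mod_cast hab)
    have hun : (⋃ n : ℕ, {ω | X ω ≤ (n:ℝ)}) = Set.univ := by
      ext ω
      simp only [Set.mem_iUnion, Set.mem_univ, iff_true, Set.mem_setOf_eq]
      exact exists_nat_ge (X ω)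
    have ht : Filter.Tendsto (fun n : ℕ => μ {ω | X ω ≤ (n:ℝ)}) Filter.atTop (nhds 1) := by
      have := tendsto_measure_iUnion_atTop (μ := μ) hmono
      simpa [hun, Function.comp_def] using this
    have ht2 : Filter.Tendsto (fun n : ℕ => cdf' μ X n) Filter.atTop (nhds 1) := by
      have := (ENNReal.tendsto_toReal (ENNReal.one_ne_top)).comp ht
      simpa [cdf', Function.comp_def] using this
    exact (ht2.eventually (eventually_ge_nhds hp.2)).exists
  obtain ⟨x₀, hx₀mem, hx₀⟩ : p ∈ cdf' μ X '' Set.Icc 0 (n:ℝ) := by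
    apply intermediate_value_Icc (by positivity) hFcont.continuousOn
    exact ⟨by rw [hF0]; exact hp.1.le, hn⟩
  have hleast : IsLeast {x : ℝ | p ≤ cdf' μ X x} x₀ := by
    constructor
    · simp [Set.mem_setOf_eq, hx₀]
    · intro y hy
      by_contra hcon
      push_neg at hcon
      rcases lt_or_ge y 0 with hy0 | hy0
      · have : cdf' μ X y ≤ 0 := by
          rw [← hF0]; exact cdf'_mono μ X hy0.le
        exact absurd (le_trans hy this) (not_le.2 hp.1)
      · have : cdf' μ X y < cdf' μ X x₀ := hFmono hy0 hx₀mem.1 hcon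
        rw [hx₀] at this
        exact absurd hy (not_le.2 this)
  rw [show quantile μ X p = x₀ from hleast.csInf_eq]
  exact hleast

lemma cdf'_quantile (hFcont : Continuous (cdf' μ X))
    (hFmono : StrictMonoOn (cdf' μ X) (Set.Ici 0)) (hF0 : cdf' μ X 0 = 0)
    {p : ℝ} (hp : p ∈ Set.Ioo (0:ℝ) 1) :
    cdf' μ X (quantile μ X p) = p ∧ 0 ≤ quantile μ X p := by
  have h := quantile_isLeast μ X hFcont hFmono hF0 hp
  have hq0 : 0 ≤ quantile μ X p := by
    by_contra hcon
    push_neg at hcon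
    have : cdf' μ X (quantile μ X p) ≤ 0 := by
      rw [← hF0]; exact cdf'_mono μ X hcon.le
    exact absurd (le_trans h.1 this) (not_le.2 hp.1)
  refine ⟨le_antisymm ?_ h.1, hq0⟩
  by_contra hcon
  push_neg at hcon
  have hqpos : 0 < quantile μ X p := by
    rcases hq0.lt_or_eq with h' | h'
    · exact h'
    · rw [← h', hF0] at hcon; exact absurd (hp.1.trans hcon) (lt_irrefl _)
  obtain ⟨ε, hε, hball⟩ := Metric.continuousAt_iff.mp (hFcont.continuousAt (x := quantile μ X p))
    (cdf' μ X (quantile μ X p) - p) (by linarith)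
  set y := quantile μ X p - min (ε/2) (quantile μ X p / 2) with hy
  have hylt : y < quantile μ X p := by
    have h2 : 0 < min (ε/2) (quantile μ X p / 2) := lt_min (by linarith) (by linarith)
    simp only [hy]; linarith
  have hdist : dist y (quantile μ X p) < ε := by
    have h1 : min (ε/2) (quantile μ X p / 2) ≤ ε/2 := min_le_left _ _
    have h2 : 0 < min (ε/2) (quantile μ X p / 2) := lt_min (by linarith) (by linarith)
    rw [Real.dist_eq, hy]
    rw [abs_lt]; constructor <;> linarith
  have := hball hdist
  rw [Real.dist_eq, abs_lt] at this
  have hymem : y ∈ {x : ℝ | p ≤ cdf' μ X x} := by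
    simp only [Set.mem_setOf_eq]; linarith [this.1]
  exact absurd (h.2 hymem) (not_le.2 hylt)

lemma le_quantile_iff (hFcont : Continuous (cdf' μ X))
    (hFmono : StrictMonoOn (cdf' μ X) (Set.Ici 0)) (hF0 : cdf' μ X 0 = 0)
    {p : ℝ} (hp : p ∈ Set.Ioo (0:ℝ) 1) {x : ℝ} (hx : 0 ≤ x) :
    x ≤ quantile μ X p ↔ cdf' μ X x ≤ p := by
  obtain ⟨hqF, hq0⟩ := cdf'_quantile μ X hFcont hFmono hF0 hp
  constructor
  · intro h; rw [← hqF]; exact cdf'_mono μ X h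
  · intro h
    by_contra hcon
    push_neg at hcon
    have : cdf' μ X (quantile μ X p) < cdf' μ X x := hFmono hq0 hx hcon
    rw [hqF] at this
    exact absurd h (not_le.2 this)

end Aux

lemma indicator_Ioc_integral {m : ℝ} (h0 : 0 ≤ m) (h1 : m ≤ 1) :
    ∫ p in Set.Ioc (0:ℝ) 1, Set.indicator (Set.Ici m) (fun _ => (1:ℝ)) p = 1 - m := by
  rw [MeasureTheory.integral_indicator measurableSet_Ici,
      Measure.restrict_restrict measurableSet_Ici, MeasureTheory.integral_const]
  have hvol : volume (Set.Ici m ∩ Set.Ioc 0 1) = ENNReal.ofReal (1 - m) := by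
    have hsub1 : Set.Ioc m 1 ⊆ Set.Ici m ∩ Set.Ioc 0 1 := fun x hx =>
      ⟨le_of_lt hx.1, lt_of_le_of_lt h0 hx.1, hx.2⟩
    have hsub2 : Set.Ici m ∩ Set.Ioc 0 1 ⊆ Set.Icc m 1 := fun x hx => ⟨hx.1, hx.2.2⟩
    refine le_antisymm ?_ ?_
    · calc volume (Set.Ici m ∩ Set.Ioc 0 1) ≤ volume (Set.Icc m 1) := measure_mono hsub2
        _ = ENNReal.ofReal (1 - m) := by rw [Real.volume_Icc]
    · calc ENNReal.ofReal (1-m) = volume (Set.Ioc m 1) := (Real.volume_Ioc).symm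
        _ ≤ _ := measure_mono hsub1
  simp [Measure.real, Measure.restrict_apply_univ, hvol, ENNReal.toReal_ofReal (by linarith : (0:ℝ) ≤ 1 - m)]

/-- representation of `ABC²(Y,X)` in terms of an independent copy
`(Y',X')` of `(Y,X)`:
`ABC² = E[(Y−X)(Y'−X')(1 − max{F_X(X), F_X(X')})] / E[Y]²`. -/
theorem abc_sq_representation
    {Ω : Type*} {m0 : MeasurableSpace Ω} (μ : Measure Ω) [IsProbabilityMeasure μ]
    (Y X Y' X' : Ω → ℝ) (hX : Measurable X) (hX' : Measurable X')
    (hY : Integrable Y μ) (hXint : Integrable X μ)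
    (hY0 : 0 ≤ᵐ[μ] Y) (hX0 : 0 ≤ᵐ[μ] X)
    (hmean : ∫ ω, Y ω ∂μ = ∫ ω, X ω ∂μ) (hpos : 0 < ∫ ω, Y ω ∂μ)
    (hFcont : Continuous (cdf' μ X)) (hFmono : StrictMonoOn (cdf' μ X) (Set.Ici 0))
    (hF0 : cdf' μ X 0 = 0)
    (hcopy : IdentDistrib (fun ω => (Y ω, X ω)) (fun ω => (Y' ω, X' ω)) μ μ)
    (hindep : IndepFun (fun ω => (Y ω, X ω)) (fun ω => (Y' ω, X' ω)) μ)
    (hint : Integrable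
      (fun ω => (Y ω - X ω) * (Y' ω - X' ω)
        * (1 - max (cdf' μ X (X ω)) (cdf' μ X (X' ω)))) μ) :
    ∫ p in (0:ℝ)..1, (CC μ Y X p - LC μ X p) ^ 2
      = (∫ ω, (Y ω - X ω) * (Y' ω - X' ω)
            * (1 - max (cdf' μ X (X ω)) (cdf' μ X (X' ω))) ∂μ)
        / (∫ ω, Y ω ∂μ) ^ 2 := by
  classical
  set F := cdf' μ X with hFdef
  have hFmeas : Measurable F := hFcont.measurable
  set E := ∫ ω, Y ω ∂μ with hEdef
  set Z : Ω → ℝ := fun ω => Y ω - X ω with hZdef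
  set Z' : Ω → ℝ := fun ω => Y' ω - X' ω with hZ'def
  have hZint : Integrable Z μ := hY.sub hXint
  have usub : Measurable (fun q : ℝ × ℝ => q.1 - q.2) := measurable_fst.sub measurable_snd
  have hZZ : IdentDistrib Z Z' μ μ := by
    have := hcopy.comp usub
    simpa [Function.comp_def] using this
  have hZ'int : Integrable Z' μ := hZZ.integrable_iff.mp hZint
  have hindZ : IndepFun Z Z' μ := by
    have := hindep.comp usub usub
    simpa [Function.comp_def] using this
  have hZZ'int : Integrable (fun ω => Z ω * Z' ω) μ := by
    have := hindZ.integrable_mul hZint hZ'int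
    exact this
  -- indicator machinery
  set ind : ℝ → ℝ → ℝ := fun p => Set.indicator {v : ℝ | F v ≤ p} (fun _ => (1:ℝ)) with hinddef
  have hsetmeas : ∀ p : ℝ, MeasurableSet {v : ℝ | F v ≤ p} := fun p =>
    measurableSet_le hFmeas measurable_const
  have hindmeas : ∀ p : ℝ, Measurable (ind p) := fun p =>
    measurable_const.indicator (hsetmeas p)
  have hindle : ∀ p x : ℝ, ‖ind p x‖ ≤ 1 := by
    intro p x
    by_cases h : F x ≤ p <;> simp [hinddef, Set.indicator_apply, h]
  -- Claim A
  have hCCLC : ∀ p ∈ Set.Ioo (0:ℝ) 1,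
      CC μ Y X p - LC μ X p = (∫ ω in {ω | F (X ω) ≤ p}, Z ω ∂μ) / E := by
    intro p hp
    have hs : {ω | X ω ≤ quantile μ X p} =ᵐ[μ] {ω | F (X ω) ≤ p} := by
      apply Filter.eventuallyEq_set.2
      filter_upwards [hX0] with ω hω
      exact le_quantile_iff μ X hFcont hFmono hF0 hp hω
    rw [CC, LC, ← hmean, ← hEdef, div_sub_div_same,
        setIntegral_congr_set hs (f := Y), setIntegral_congr_set hs (f := X),
        ← integral_sub hY.integrableOn hXint.integrableOn]
  -- Claim B
  have hB : ∀ p : ℝ,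
      (∫ ω in {ω | F (X ω) ≤ p}, Z ω ∂μ) ^ 2
        = ∫ ω, Z ω * Z' ω * (ind p (X ω) * ind p (X' ω)) ∂μ := by
    intro p
    set W : Ω → ℝ := fun ω => Z ω * ind p (X ω) with hWdef
    set W' : Ω → ℝ := fun ω => Z' ω * ind p (X' ω) with hW'def
    have hWaesm : AEStronglyMeasurable W μ :=
      hZint.aestronglyMeasurable.mul ((hindmeas p).comp hX).aestronglyMeasurable
    have hY'aem : AEMeasurable Y' μ :=
      measurable_fst.comp_aemeasurable hcopy.aemeasurable_snd
    have hW'aesm : AEStronglyMeasurable W' μ :=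
      (hY'aem.sub hX'.aemeasurable).aestronglyMeasurable.mul
        ((hindmeas p).comp hX').aestronglyMeasurable
    set φ : ℝ × ℝ → ℝ :=
      fun q => (q.1 - q.2) * Set.indicator {v : ℝ | F v ≤ p} (fun _ => (1:ℝ)) q.2 with hφdef
    have hφmeas : Measurable φ :=
      usub.mul ((measurable_const.indicator (hsetmeas p)).comp measurable_snd)
    have hφA : W = φ ∘ (fun ω => (Y ω, X ω)) := rfl
    have hφA' : W' = φ ∘ (fun ω => (Y' ω, X' ω)) := rfl
    have hWW'indep : IndepFun W W' μ := by
      rw [hφA, hφA']; exact hindep.comp hφmeas hφmeas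
    have hWW'id : ∫ ω, W' ω ∂μ = ∫ ω, W ω ∂μ := by
      rw [hφA, hφA']
      exact ((hcopy.comp hφmeas).integral_eq).symm
    have hSmeas : MeasurableSet {ω | F (X ω) ≤ p} :=
      measurableSet_le (hFmeas.comp hX) measurable_const
    have hset : ∫ ω in {ω | F (X ω) ≤ p}, Z ω ∂μ = ∫ ω, W ω ∂μ := by
      rw [← integral_indicator hSmeas]
      apply integral_congr_ae
      apply Filter.Eventually.of_forall
      intro ω
      by_cases h : F (X ω) ≤ p <;>
        simp [hWdef, hinddef, Set.indicator_apply, h, Set.mem_setOf_eq]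
    have hmul : ∫ ω, W ω * W' ω ∂μ = (∫ ω, W ω ∂μ) * (∫ ω, W' ω ∂μ) := by
      have := hWW'indep.integral_mul_eq_mul_integral hWaesm hW'aesm
      simpa [Pi.mul_apply] using this
    rw [hset, sq]
    nth_rewrite 2 [← hWW'id]
    rw [← hmul]
    apply integral_congr_ae
    apply Filter.Eventually.of_forall
    intro ω
    simp only [hWdef, hW'def]
    ring
  -- the product-space function
  set f : ℝ → Ω → ℝ := fun p ω => Z ω * Z' ω * (ind p (X ω) * ind p (X' ω)) with hfdef
  haveI : Fact (volume (Set.Ioc (0:ℝ) 1) < ⊤) := ⟨by simp⟩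
  set ν : Measure ℝ := volume.restrict (Set.Ioc (0:ℝ) 1) with hνdef
  have hfint : Integrable (Function.uncurry f) (ν.prod μ) := by
    have hdom : Integrable (fun q : ℝ × Ω => (1:ℝ) * (Z q.2 * Z' q.2)) (ν.prod μ) :=
      (integrable_const (1:ℝ)).mul_prod hZZ'int
    have hY'aem : AEMeasurable Y' μ :=
      measurable_fst.comp_aemeasurable hcopy.aemeasurable_snd
    have haesm : AEStronglyMeasurable (Function.uncurry f) (ν.prod μ) := by
      have hT : MeasurableSet {q : ℝ × Ω | F (X q.2) ≤ q.1} :=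
        measurableSet_le ((hFmeas.comp hX).comp measurable_snd) measurable_fst
      have hT' : MeasurableSet {q : ℝ × Ω | F (X' q.2) ≤ q.1} :=
        measurableSet_le ((hFmeas.comp hX').comp measurable_snd) measurable_fst
      have hg : AEStronglyMeasurable
          (fun q : ℝ × Ω => Z q.2 * Z' q.2 *
            (Set.indicator {q : ℝ × Ω | F (X q.2) ≤ q.1} (fun _ => (1:ℝ)) q *
             Set.indicator {q : ℝ × Ω | F (X' q.2) ≤ q.1} (fun _ => (1:ℝ)) q)) (ν.prod μ) := by
        apply AEStronglyMeasurable.mul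
        · exact (hZint.aestronglyMeasurable.comp_snd).mul
            ((hY'aem.sub hX'.aemeasurable).aestronglyMeasurable.comp_snd)
        · exact ((measurable_const.indicator hT).mul
            (measurable_const.indicator hT')).aestronglyMeasurable
      apply hg.congr
      apply Filter.Eventually.of_forall
      intro q
      simp only [Function.uncurry, hfdef, hinddef, Set.indicator_apply, Set.mem_setOf_eq]
    apply hdom.mono haesm
    apply Filter.Eventually.of_forall
    intro q
    simp only [Function.uncurry, hfdef, norm_mul, one_mul]
    calc ‖Z q.2‖ * ‖Z' q.2‖ * (‖ind q.1 (X q.2)‖ * ‖ind q.1 (X' q.2)‖)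
        ≤ ‖Z q.2‖ * ‖Z' q.2‖ * 1 := by
          apply mul_le_mul_of_nonneg_left _ (by positivity)
          calc ‖ind q.1 (X q.2)‖ * ‖ind q.1 (X' q.2)‖
              ≤ 1 * 1 := mul_le_mul (hindle _ _) (hindle _ _) (norm_nonneg _) zero_le_one
            _ = 1 := one_mul 1
      _ = ‖Z q.2‖ * ‖Z' q.2‖ := mul_one _
  -- inner integral over p
  have hinner : ∀ ω : Ω, ∫ p, f p ω ∂ν
      = Z ω * Z' ω * (1 - max (F (X ω)) (F (X' ω))) := by
    intro ω
    have hind2 : ∀ p : ℝ, ind p (X ω) * ind p (X' ω)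
        = Set.indicator (Set.Ici (max (F (X ω)) (F (X' ω)))) (fun _ => (1:ℝ)) p := by
      intro p
      by_cases h1 : F (X ω) ≤ p <;> by_cases h2 : F (X' ω) ≤ p <;>
        simp [hinddef, Set.indicator_apply, h1, h2, max_le_iff, Set.mem_Ici]
    simp only [hfdef]
    rw [MeasureTheory.integral_const_mul]
    congr 1
    have hm0 : 0 ≤ max (F (X ω)) (F (X' ω)) :=
      le_trans (cdf'_nonneg μ X _) (le_max_left _ _)
    have hm1 : max (F (X ω)) (F (X' ω)) ≤ 1 :=
      max_le (cdf'_le_one μ X _) (cdf'_le_one μ X _)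
    calc ∫ p, ind p (X ω) * ind p (X' ω) ∂ν
        = ∫ p in Set.Ioc (0:ℝ) 1,
            Set.indicator (Set.Ici (max (F (X ω)) (F (X' ω)))) (fun _ => (1:ℝ)) p := by
          rw [hνdef]; exact integral_congr_ae (Filter.Eventually.of_forall fun p => hind2 p)
      _ = 1 - max (F (X ω)) (F (X' ω)) := indicator_Ioc_integral hm0 hm1
  -- main chain
  have hmain : ∫ p in (0:ℝ)..1, (CC μ Y X p - LC μ X p) ^ 2
      = (∫ p, ∫ ω, f p ω ∂μ ∂ν) / E ^ 2 := by
    have hstep1 : ∫ p in (0:ℝ)..1, (CC μ Y X p - LC μ X p) ^ 2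
        = ∫ p in (0:ℝ)..1, (∫ ω, f p ω ∂μ) / E ^ 2 := by
      apply intervalIntegral.integral_congr_ae
      have hne1 : ∀ᵐ p : ℝ, p ≠ 1 := by
        rw [Filter.eventually_iff]
        rw [mem_ae_iff]
        simpa using Real.volume_singleton (x := 1)
      filter_upwards [hne1] with p hp1 hpI
      rw [Set.uIoc_of_le zero_le_one] at hpI
      have hp : p ∈ Set.Ioo (0:ℝ) 1 := ⟨hpI.1, lt_of_le_of_ne hpI.2 hp1⟩
      rw [hCCLC p hp, div_pow, hB p]
    rw [hstep1, intervalIntegral.integral_div,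
        intervalIntegral.integral_of_le zero_le_one]
  rw [hmain, integral_integral_swap hfint]
  have hlast : ∫ ω, ∫ p, f p ω ∂ν ∂μ
      = ∫ ω, Z ω * Z' ω * (1 - max (F (X ω)) (F (X' ω))) ∂μ :=
    integral_congr_ae (Filter.Eventually.of_forall hinner)
  rw [hlast]
end

section
/- For a nonnegative integrable random variable X with E[X] > 0, the Gini index representations coincide: 2·Cov(X, F_X(X))/E[X] = E[|X − X'|]/(2E[X]) = (1/E[X])·∫₀^∞ F_X(z)(1 − F_X(z)) dz, where X' is an independent copy of X and F_X is assumed continuous. -/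
open MeasureTheory ProbabilityTheory
open Set ENNReal
set_option linter.unusedSectionVars false
set_option maxHeartbeats 1000000


section Aux
variable (ν : MeasureTheory.Measure ℝ) [MeasureTheory.IsProbabilityMeasure ν]

variable (ν : MeasureTheory.Measure ℝ) [MeasureTheory.IsProbabilityMeasure ν]


lemma meas_a : Measurable (fun x => ν (Iic x)) := by
  apply Monotone.measurable
  intro x y h
  exact measure_mono (Iic_subset_Iic.2 h)

/-- swap lemma -/
lemma moment_swap (g : ℝ → ℝ≥0∞) (hg : Measurable g) :
    ∫⁻ x, g x * ENNReal.ofReal x ∂ν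
      = ∫⁻ z in Ioi (0:ℝ), ∫⁻ x in Ioi z, g x ∂ν := by
  have hmeas : AEMeasurable
      (Function.uncurry (fun (x z : ℝ) => (Ioi z).indicator g x)) (ν.prod (volume.restrict (Ioi 0))) := by
    have hset : MeasurableSet {p : ℝ × ℝ | p.2 < p.1} :=
      measurableSet_lt measurable_snd measurable_fst
    have : (Function.uncurry (fun (x z : ℝ) => (Ioi z).indicator g x))
        = {p : ℝ × ℝ | p.2 < p.1}.indicator (fun p => g p.1) := by
      ext p
      by_cases h : p.2 < p.1
      · simp [Function.uncurry, Set.indicator_of_mem, h, Set.indicator_of_mem (mem_Ioi.2 h)]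
      · simp [Function.uncurry, Set.indicator_of_notMem, h,
          Set.indicator_of_notMem (fun hm => h (mem_Ioi.1 hm))]
    rw [this]
    exact ((hg.comp measurable_fst).indicator hset).aemeasurable
  have inner : ∀ x : ℝ, ∫⁻ z in Ioi (0:ℝ), (Ioi z).indicator g x = g x * ENNReal.ofReal x := by
    intro x
    have h1 : (fun z : ℝ => (Ioi z).indicator g x) = (Iio x).indicator (fun _ => g x) := by
      ext z
      by_cases h : z < x
      · simp [Set.indicator_of_mem, h, mem_Ioi, mem_Iio]
      · simp [Set.indicator_of_notMem, h, mem_Ioi, mem_Iio]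
    rw [h1, lintegral_indicator measurableSet_Iio, setLIntegral_const,
      Measure.restrict_apply measurableSet_Iio]
    have : Iio x ∩ Ioi (0:ℝ) = Ioo 0 x := by ext z; simp [mem_Ioo, and_comm]
    rw [this, Real.volume_Ioo, sub_zero]
  calc ∫⁻ x, g x * ENNReal.ofReal x ∂ν
      = ∫⁻ x, (∫⁻ z in Ioi (0:ℝ), (Ioi z).indicator g x) ∂ν := by
        exact lintegral_congr (μ := ν) fun x => (inner x).symm
    _ = ∫⁻ z in Ioi (0:ℝ), ∫⁻ x, (Ioi z).indicator g x ∂ν := lintegral_lintegral_swap (f := fun x z => (Ioi z).indicator g x) hmeas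
    _ = ∫⁻ z in Ioi (0:ℝ), ∫⁻ x in Ioi z, g x ∂ν := by
        refine lintegral_congr fun z => ?_
        rw [lintegral_indicator measurableSet_Ioi]


lemma noatom (hF : Continuous (fun t => (ν (Iic t)).toReal)) (t : ℝ) : ν {t} = 0 := by
  have key : ν (Iic t) ≤ ν (Iio t) := by
    rw [← ENNReal.toReal_le_toReal (measure_ne_top ν _) (measure_ne_top ν _)]
    apply _root_.le_of_forall_pos_le_add
    intro ε hε
    obtain ⟨δ, hδ, hcont⟩ := Metric.continuousAt_iff.mp hF.continuousAt ε hε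
    have hd : dist (t - δ/2) t < δ := by
      rw [Real.dist_eq]
      rw [abs_of_nonpos (by linarith)]
      linarith
    have h2 := hcont hd
    rw [Real.dist_eq] at h2
    have h3 : (ν (Iic t)).toReal - (ν (Iic (t - δ/2))).toReal < ε := by
      have := abs_lt.mp h2
      linarith [this.1]
    have h4 : (ν (Iic (t - δ/2))).toReal ≤ (ν (Iio t)).toReal :=
      ENNReal.toReal_mono (measure_ne_top ν _)
        (measure_mono (Iic_subset_Iio.2 (by linarith)))
    linarith
  have hset : Iic t \ Iio t = {t} := by
    ext x; simp only [mem_diff, mem_Iic, mem_Iio, not_lt, mem_singleton_iff]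
    constructor
    · rintro ⟨h1, h2⟩; linarith
    · rintro rfl; exact ⟨le_refl _, le_refl _⟩
  rw [← hset, measure_diff Iio_subset_Iic_self measurableSet_Iio.nullMeasurableSet
    (measure_ne_top ν _)]
  exact tsub_eq_zero_of_le key

lemma nu_Iio (hna : ∀ t : ℝ, ν {t} = 0) (x : ℝ) : ν (Iio x) = ν (Iic x) := by
  refine le_antisymm (measure_mono Iio_subset_Iic_self) ?_
  calc ν (Iic x) = ν (Iio x ∪ {x}) := by rw [Iio_union_right]
    _ ≤ ν (Iio x) + ν {x} := measure_union_le _ _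
    _ = ν (Iio x) := by rw [hna, add_zero]

lemma two_J (hna : ∀ t : ℝ, ν {t} = 0) (z : ℝ) :
    (∫⁻ x in Ioi z, ν (Iic x) ∂ν) + (∫⁻ x in Ioi z, ν (Iic x) ∂ν)
      = 1 - ν (Iic z) * ν (Iic z) := by
  set A : Set (ℝ × ℝ) := {p | z < p.1 ∧ p.2 ≤ p.1} with hA
  set B : Set (ℝ × ℝ) := {p | z < p.2 ∧ p.1 < p.2} with hB
  set A' : Set (ℝ × ℝ) := {p | z < p.1 ∧ p.2 < p.1} with hA'
  have hAm : MeasurableSet A :=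
    (measurableSet_lt measurable_const measurable_fst).inter
      (measurableSet_le measurable_snd measurable_fst)
  have hA'm : MeasurableSet A' :=
    (measurableSet_lt measurable_const measurable_fst).inter
      (measurableSet_lt measurable_snd measurable_fst)
  have hBm : MeasurableSet B :=
    (measurableSet_lt measurable_const measurable_snd).inter
      (measurableSet_lt measurable_fst measurable_snd)
  have hAval : ν.prod ν A = ∫⁻ x in Ioi z, ν (Iic x) ∂ν := by
    rw [Measure.prod_apply hAm, ← lintegral_indicator measurableSet_Ioi]
    refine lintegral_congr fun x => ?_
    by_cases h : z < x
    · have hpre : Prod.mk x ⁻¹' A = Iic x := by ext y; simp [hA, h]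
      rw [hpre, Set.indicator_of_mem (mem_Ioi.2 h)]
    · have hpre : Prod.mk x ⁻¹' A = ∅ := by ext y; simp [hA, h]
      rw [hpre, Set.indicator_of_notMem (by simpa using h)]
      simp
  have hA'val : ν.prod ν A' = ∫⁻ x in Ioi z, ν (Iic x) ∂ν := by
    rw [Measure.prod_apply hA'm, ← lintegral_indicator measurableSet_Ioi]
    refine lintegral_congr fun x => ?_
    by_cases h : z < x
    · have hpre : Prod.mk x ⁻¹' A' = Iio x := by ext y; simp [hA', h]
      rw [hpre, Set.indicator_of_mem (mem_Ioi.2 h), nu_Iio ν hna]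
    · have hpre : Prod.mk x ⁻¹' A' = ∅ := by ext y; simp [hA', h]
      rw [hpre, Set.indicator_of_notMem (by simpa using h)]
      simp
  have hBval : ν.prod ν B = ∫⁻ x in Ioi z, ν (Iic x) ∂ν := by
    have hswap : B = Prod.swap ⁻¹' A' := by
      ext p; simp [hA', hB, Prod.swap]
    rw [hswap, ← Measure.map_apply measurable_swap hA'm, Measure.prod_swap, hA'val]
  have hdisj : Disjoint A B := by
    rw [Set.disjoint_left]
    rintro p ⟨_, h2⟩ ⟨_, h4⟩
    exact absurd h2 (not_le.2 h4)
  have hunion : A ∪ B = (Iic z ×ˢ Iic z)ᶜ := by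
    ext p
    simp only [mem_union, hA, hB, mem_setOf_eq, mem_compl_iff, Set.mem_prod, mem_Iic,
      not_and_or, not_le]
    constructor
    · rintro (⟨h1, _⟩ | ⟨h1, _⟩)
      · exact Or.inl h1
      · exact Or.inr h1
    · rintro (h | h)
      · rcases le_or_gt p.2 p.1 with h2 | h2
        · exact Or.inl ⟨h, h2⟩
        · exact Or.inr ⟨h.trans h2, h2⟩
      · rcases le_or_gt p.2 p.1 with h2 | h2
        · exact Or.inl ⟨lt_of_lt_of_le h h2, h2⟩
        · exact Or.inr ⟨h, h2⟩
  calc (∫⁻ x in Ioi z, ν (Iic x) ∂ν) + (∫⁻ x in Ioi z, ν (Iic x) ∂ν)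
      = ν.prod ν A + ν.prod ν B := by rw [hAval, hBval]
    _ = ν.prod ν (A ∪ B) := (measure_union hdisj hBm).symm
    _ = 1 - ν.prod ν (Iic z ×ˢ Iic z) := by
        rw [hunion, prob_compl_eq_one_sub (measurableSet_Iic.prod measurableSet_Iic)]
    _ = 1 - ν (Iic z) * ν (Iic z) := by rw [Measure.prod_prod]

lemma two_total (hna : ∀ t : ℝ, ν {t} = 0) :
    (∫⁻ x, ν (Iic x) ∂ν) + (∫⁻ x, ν (Iic x) ∂ν) = 1 := by
  set A : Set (ℝ × ℝ) := {p | p.2 ≤ p.1} with hA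
  set B : Set (ℝ × ℝ) := {p | p.1 < p.2} with hB
  have hAm : MeasurableSet A := measurableSet_le measurable_snd measurable_fst
  have hBm : MeasurableSet B := measurableSet_lt measurable_fst measurable_snd
  have hAval : ν.prod ν A = ∫⁻ x, ν (Iic x) ∂ν := by
    rw [Measure.prod_apply hAm]
    refine lintegral_congr fun x => ?_
    congr 1
  have hBval : ν.prod ν B = ∫⁻ x, ν (Iic x) ∂ν := by
    have hswap : B = Prod.swap ⁻¹' {p : ℝ × ℝ | p.2 < p.1} := by
      ext p; simp [hB, Prod.swap]
    rw [hswap, ← Measure.map_apply measurable_swap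
      (measurableSet_lt measurable_snd measurable_fst), Measure.prod_swap,
      Measure.prod_apply (measurableSet_lt measurable_snd measurable_fst)]
    refine lintegral_congr fun x => ?_
    have hpre : Prod.mk x ⁻¹' {p : ℝ × ℝ | p.2 < p.1} = Iio x := by ext y; simp
    rw [hpre, nu_Iio ν hna]
  have hdisj : Disjoint A B := by
    rw [Set.disjoint_left]
    intro p h2 h4
    simp only [hA, mem_setOf_eq] at h2
    simp only [hB, mem_setOf_eq] at h4
    exact absurd h2 (not_le.2 h4)
  have hunion : A ∪ B = univ := by
    ext p
    simp only [mem_union, hA, hB, mem_setOf_eq, mem_univ, iff_true]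
    exact le_or_gt p.2 p.1
  calc (∫⁻ x, ν (Iic x) ∂ν) + (∫⁻ x, ν (Iic x) ∂ν)
      = ν.prod ν A + ν.prod ν B := by rw [hAval, hBval]
    _ = ν.prod ν (A ∪ B) := (measure_union hdisj hBm).symm
    _ = 1 := by rw [hunion, measure_univ]


lemma volIco (x y : ℝ) (hy : 0 ≤ y) :
    volume (Ico y x ∩ Ioi 0) = ENNReal.ofReal (x - y) := by
  refine le_antisymm ?_ ?_
  · calc volume (Ico y x ∩ Ioi 0) ≤ volume (Ico y x) := measure_mono inter_subset_left
      _ = ENNReal.ofReal (x - y) := Real.volume_Ico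
  · calc ENNReal.ofReal (x - y) = volume (Ioo y x) := Real.volume_Ioo.symm
      _ ≤ volume (Ico y x ∩ Ioi 0) := by
          refine measure_mono fun z hz => ?_
          exact ⟨⟨le_of_lt hz.1, hz.2⟩, lt_of_le_of_lt hy hz.1⟩

lemma diff_lintegral (h0 : ν (Iio 0) = 0) :
    ∫⁻ p : ℝ × ℝ, ENNReal.ofReal (p.1 - p.2) ∂(ν.prod ν)
      = ∫⁻ z in Ioi (0:ℝ), (1 - ν (Iic z)) * ν (Iic z) := by
  set f : ℝ × ℝ → ℝ → ℝ≥0∞ := fun p z => (Ico p.2 p.1).indicator 1 z with hf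
  have hmeas : AEMeasurable (Function.uncurry f)
      ((ν.prod ν).prod (volume.restrict (Ioi 0))) := by
    have hset : MeasurableSet {w : (ℝ × ℝ) × ℝ | w.1.2 ≤ w.2 ∧ w.2 < w.1.1} :=
      (measurableSet_le (measurable_fst.snd) measurable_snd).inter
        (measurableSet_lt measurable_snd (measurable_fst.fst))
    have heq : Function.uncurry f
        = ({w : (ℝ × ℝ) × ℝ | w.1.2 ≤ w.2 ∧ w.2 < w.1.1}).indicator 1 := by
      ext w
      simp [hf, Function.uncurry, Set.indicator_apply, mem_Ico]
    rw [heq]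
    exact ((measurable_one).indicator hset).aemeasurable
  have haep : ∀ᵐ p ∂(ν.prod ν), (0:ℝ) ≤ p.2 := by
    rw [MeasureTheory.ae_iff]
    have : {p : ℝ × ℝ | ¬ (0:ℝ) ≤ p.2} = univ ×ˢ Iio 0 := by
      ext p; simp [not_le]
    rw [this, Measure.prod_prod, h0, mul_zero]
  calc ∫⁻ p : ℝ × ℝ, ENNReal.ofReal (p.1 - p.2) ∂(ν.prod ν)
      = ∫⁻ p, (∫⁻ z in Ioi (0:ℝ), f p z) ∂(ν.prod ν) := by
        refine lintegral_congr_ae (haep.mono fun p hp => ?_)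
        rw [hf]
        simp only
        rw [lintegral_indicator_one measurableSet_Ico,
          Measure.restrict_apply measurableSet_Ico, volIco _ _ hp]
    _ = ∫⁻ z in Ioi (0:ℝ), ∫⁻ p, f p z ∂(ν.prod ν) :=
        lintegral_lintegral_swap (f := f) hmeas
    _ = ∫⁻ z in Ioi (0:ℝ), (1 - ν (Iic z)) * ν (Iic z) := by
        refine lintegral_congr fun z => ?_
        have heq : (fun p : ℝ × ℝ => f p z) = (Ioi z ×ˢ Iic z).indicator 1 := by
          ext p
          simp [hf, Set.indicator_apply, mem_Ico, Set.mem_prod, and_comm]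
        rw [heq, lintegral_indicator_one (measurableSet_Ioi.prod measurableSet_Iic),
          Measure.prod_prod, ← prob_compl_eq_one_sub measurableSet_Iic, compl_Iic]

lemma abs_diff_lintegral (h0 : ν (Iio 0) = 0) :
    ∫⁻ p : ℝ × ℝ, ENNReal.ofReal |p.1 - p.2| ∂(ν.prod ν)
      = (∫⁻ z in Ioi (0:ℝ), (1 - ν (Iic z)) * ν (Iic z))
        + (∫⁻ z in Ioi (0:ℝ), (1 - ν (Iic z)) * ν (Iic z)) := by
  have hpt : ∀ p : ℝ × ℝ, ENNReal.ofReal |p.1 - p.2|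
      = ENNReal.ofReal (p.1 - p.2) + ENNReal.ofReal (p.2 - p.1) := by
    intro p
    rcases le_total p.2 p.1 with h | h
    · have h1 : ENNReal.ofReal (p.2 - p.1) = 0 := ENNReal.ofReal_of_nonpos (by linarith)
      rw [abs_of_nonneg (sub_nonneg.2 h), h1, add_zero]
    · have h1 : ENNReal.ofReal (p.1 - p.2) = 0 := ENNReal.ofReal_of_nonpos (by linarith)
      rw [abs_of_nonpos (by linarith : p.1 - p.2 ≤ 0), h1, zero_add, neg_sub]
  have hswap : ∫⁻ p : ℝ × ℝ, ENNReal.ofReal (p.2 - p.1) ∂(ν.prod ν)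
      = ∫⁻ p : ℝ × ℝ, ENNReal.ofReal (p.1 - p.2) ∂(ν.prod ν) := by
    conv_lhs => rw [← Measure.prod_swap]
    rw [lintegral_map (f := fun p : ℝ × ℝ => ENNReal.ofReal (p.2 - p.1))
      (measurable_snd.sub measurable_fst).ennreal_ofReal measurable_swap]
    simp [Prod.swap]
  calc ∫⁻ p : ℝ × ℝ, ENNReal.ofReal |p.1 - p.2| ∂(ν.prod ν)
      = ∫⁻ p : ℝ × ℝ, (ENNReal.ofReal (p.1 - p.2) + ENNReal.ofReal (p.2 - p.1)) ∂(ν.prod ν) :=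
        lintegral_congr hpt
    _ = (∫⁻ p : ℝ × ℝ, ENNReal.ofReal (p.1 - p.2) ∂(ν.prod ν))
        + ∫⁻ p : ℝ × ℝ, ENNReal.ofReal (p.2 - p.1) ∂(ν.prod ν) :=
        lintegral_add_left (measurable_fst.sub measurable_snd).ennreal_ofReal _
    _ = _ := by rw [hswap, diff_lintegral ν h0]

end Aux

/-- equality of the Gini index representations:
`2·Cov(X, F_X(X))/E[X] = E[|X − X'|]/(2E[X]) = (1/E[X])·∫₀^∞ F_X(z)(1−F_X(z)) dz`. -/
theorem gini_representations
    {Ω : Type*} {m0 : MeasurableSpace Ω} (μ : Measure Ω) [IsProbabilityMeasure μ]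
    (X X' : Ω → ℝ) (hX : Measurable X) (hX' : Measurable X')
    (hXint : Integrable X μ) (hX0 : 0 ≤ᵐ[μ] X)
    (hpos : 0 < ∫ ω, X ω ∂μ)
    (hFcont : Continuous (cdf' μ X))
    (hcopy : IdentDistrib X X' μ μ) (hindep : IndepFun X X' μ)
    (hintXF : Integrable (fun ω => X ω * cdf' μ X (X ω)) μ)
    (hintabs : Integrable (fun ω => |X ω - X' ω|) μ) :
    2 * ((∫ ω, X ω * cdf' μ X (X ω) ∂μ)
          - (∫ ω, X ω ∂μ) * ∫ ω, cdf' μ X (X ω) ∂μ) / (∫ ω, X ω ∂μ)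
        = (∫ ω, |X ω - X' ω| ∂μ) / (2 * ∫ ω, X ω ∂μ)
    ∧ (∫ ω, |X ω - X' ω| ∂μ) / (2 * ∫ ω, X ω ∂μ)
        = (∫ z in Set.Ioi (0:ℝ), cdf' μ X z * (1 - cdf' μ X z)) / ∫ ω, X ω ∂μ := by

  classical
  set ν : Measure ℝ := μ.map X with hνdef
  have hνprob : IsProbabilityMeasure ν := Measure.isProbabilityMeasure_map hX.aemeasurable
  have hFa : ∀ t, cdf' μ X t = (ν (Iic t)).toReal := by
    intro t
    rw [hνdef, Measure.map_apply hX measurableSet_Iic]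
    rfl
  have hFc : Continuous (fun t => (ν (Iic t)).toReal) := by
    rw [show (fun t => (ν (Iic t)).toReal) = cdf' μ X from funext fun t => (hFa t).symm]
    exact hFcont
  have hna : ∀ t, ν {t} = 0 := noatom ν hFc
  have h0 : ν (Iio 0) = 0 := by
    have h' : ∀ᵐ ω ∂μ, (0:ℝ) ≤ X ω := hX0
    rw [MeasureTheory.ae_iff] at h'
    rw [hνdef, Measure.map_apply hX measurableSet_Iio]
    have heq : X ⁻¹' Iio 0 = {ω | ¬ (0:ℝ) ≤ X ω} := by ext ω; simp [not_le]
    rw [heq]; exact h'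
  have haeν : ∀ᵐ x ∂ν, (0:ℝ) ≤ x := by
    rw [MeasureTheory.ae_iff]
    have : {x : ℝ | ¬ (0:ℝ) ≤ x} = Iio 0 := by ext x; simp [not_le]
    rw [this]; exact h0
  -- joint law
  have hjoint : μ.map (fun ω => (X ω, X' ω)) = ν.prod ν := by
    rw [(indepFun_iff_map_prod_eq_prod_map_map hX.aemeasurable hX'.aemeasurable).mp hindep,
      ← hcopy.map_eq]
  -- key lintegral quantities
  set La : ℝ≥0∞ := ∫⁻ x, ν (Iic x) * ENNReal.ofReal x ∂ν with hLadef
  set Lb : ℝ≥0∞ := ∫⁻ x, ENNReal.ofReal x ∂ν with hLbdef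
  set Lc : ℝ≥0∞ := ∫⁻ p : ℝ × ℝ, ENNReal.ofReal |p.1 - p.2| ∂(ν.prod ν) with hLcdef
  set Lh : ℝ≥0∞ := ∫⁻ x, ν (Iic x) ∂ν with hLhdef
  set P : ℝ≥0∞ := ∫⁻ z in Ioi (0:ℝ), (1 - ν (Iic z)) * ν (Iic z) with hPdef
  -- (2) Lb
  have hLb2 : Lb = ∫⁻ z in Ioi (0:ℝ), (1 - ν (Iic z)) := by
    rw [hLbdef]
    have := moment_swap ν (fun _ => 1) measurable_const
    simp only [one_mul] at this
    rw [this]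
    refine lintegral_congr fun z => ?_
    rw [setLIntegral_one, ← prob_compl_eq_one_sub measurableSet_Iic, compl_Iic]
  -- (3) La + La = Lb + P
  have hkey : La + La = Lb + P := by
    have hJmeas : Measurable (fun z => ∫⁻ x in Ioi z, ν (Iic x) ∂ν) := by
      apply Antitone.measurable
      intro z z' h
      exact lintegral_mono_set (Ioi_subset_Ioi h)
    have hLaJ : La = ∫⁻ z in Ioi (0:ℝ), ∫⁻ x in Ioi z, ν (Iic x) ∂ν :=
      moment_swap ν _ (meas_a ν)
    have pt : ∀ z : ℝ, (1 - ν (Iic z)) + (1 - ν (Iic z)) * ν (Iic z)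
        = 1 - ν (Iic z) * ν (Iic z) := by
      intro z
      set a := ν (Iic z) with ha
      have ha1 : a ≤ 1 := prob_le_one
      have haa : a * a ≠ ⊤ := by
        exact ENNReal.mul_ne_top (ne_top_of_le_ne_top ENNReal.one_ne_top ha1)
          (ne_top_of_le_ne_top ENNReal.one_ne_top ha1)
      have hca : (1 - a) + a = 1 := tsub_add_cancel_of_le ha1
      refine (ENNReal.sub_eq_of_eq_add haa ?_).symm
      calc (1:ℝ≥0∞) = (1 - a) + a := hca.symm
        _ = (1 - a) + ((1 - a) + a) * a := by rw [hca, one_mul, hca]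
        _ = (1 - a) + ((1 - a) * a + a * a) := by rw [add_mul]
        _ = ((1 - a) + (1 - a) * a) + a * a := by rw [add_assoc]
    calc La + La
        = ∫⁻ z in Ioi (0:ℝ), ((∫⁻ x in Ioi z, ν (Iic x) ∂ν) + ∫⁻ x in Ioi z, ν (Iic x) ∂ν) := by
          rw [hLaJ, lintegral_add_left hJmeas]
      _ = ∫⁻ z in Ioi (0:ℝ), ((1 - ν (Iic z)) + (1 - ν (Iic z)) * ν (Iic z)) := by
          refine lintegral_congr fun z => ?_
          rw [two_J ν hna z, ← pt z]
      _ = Lb + P := by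
          rw [lintegral_add_left (f := fun z => (1:ℝ≥0∞) - ν (Iic z))
            (measurable_const.sub (meas_a ν)), ← hLb2, hPdef]
  -- (4) Lc = P + P
  have hLcP : Lc = P + P := abs_diff_lintegral ν h0
  -- (1) Lh
  have hLh : Lh + Lh = 1 := two_total ν hna
  have hLhfin : Lh ≠ ⊤ := by
    intro h
    rw [h] at hLh
    simp at hLh
  -- finiteness
  have hμLb : ∫⁻ ω, ENNReal.ofReal (X ω) ∂μ = Lb := by
    rw [hLbdef, hνdef, lintegral_map ENNReal.measurable_ofReal hX]
  have hLbfin : Lb ≠ ⊤ := by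
    rw [← hμLb]
    exact ((hasFiniteIntegral_iff_ofReal hX0).mp hXint.2).ne
  have hμLa : ∫⁻ ω, ENNReal.ofReal (X ω * cdf' μ X (X ω)) ∂μ = La := by
    have h1 : ∫⁻ ω, ENNReal.ofReal (X ω * cdf' μ X (X ω)) ∂μ
        = ∫⁻ x, ENNReal.ofReal (x * cdf' μ X x) ∂ν := by
      rw [hνdef, lintegral_map (f := fun x : ℝ => ENNReal.ofReal (x * cdf' μ X x))
        ((measurable_id'.mul hFcont.measurable).ennreal_ofReal) hX]
    rw [h1, hLadef]
    refine lintegral_congr_ae (haeν.mono fun x hx => ?_)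
    show ENNReal.ofReal (x * cdf' μ X x) = ν (Iic x) * ENNReal.ofReal x
    rw [ENNReal.ofReal_mul hx, hFa, ENNReal.ofReal_toReal (measure_ne_top ν _), mul_comm]
  have hXF0 : 0 ≤ᵐ[μ] fun ω => X ω * cdf' μ X (X ω) := by
    refine hX0.mono fun ω h => ?_
    exact mul_nonneg h ENNReal.toReal_nonneg
  have hLafin : La ≠ ⊤ := by
    rw [← hμLa]
    exact ((hasFiniteIntegral_iff_ofReal hXF0).mp hintXF.2).ne
  have hμLc : ∫⁻ ω, ENNReal.ofReal |X ω - X' ω| ∂μ = Lc := by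
    rw [hLcdef, ← hjoint,
      lintegral_map (f := fun p : ℝ × ℝ => ENNReal.ofReal |p.1 - p.2|)
        ((measurable_fst.sub measurable_snd).abs.ennreal_ofReal)
        (hX.prodMk hX')]
  have hLcfin : Lc ≠ ⊤ := by
    rw [← hμLc]
    exact ((hasFiniteIntegral_iff_ofReal (Filter.Eventually.of_forall fun ω =>
      abs_nonneg _)).mp hintabs.2).ne
  have hPfin : P ≠ ⊤ := by
    intro h
    rw [h] at hLcP
    simp at hLcP
    exact hLcfin hLcP
  -- real-valued identifications
  have hE : ∫ ω, X ω ∂μ = Lb.toReal := by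
    rw [integral_eq_lintegral_of_nonneg_ae hX0 hXint.1, hμLb]
  have hM : ∫ ω, X ω * cdf' μ X (X ω) ∂μ = La.toReal := by
    rw [integral_eq_lintegral_of_nonneg_ae hXF0 hintXF.1, hμLa]
  have hD : ∫ ω, |X ω - X' ω| ∂μ = Lc.toReal := by
    rw [integral_eq_lintegral_of_nonneg_ae
      (Filter.Eventually.of_forall fun ω => abs_nonneg _) hintabs.1, hμLc]
  have hHalf : ∫ ω, cdf' μ X (X ω) ∂μ = Lh.toReal := by
    have h1 : ∫ ω, cdf' μ X (X ω) ∂μ = ∫ x, cdf' μ X x ∂ν := by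
      rw [hνdef, integral_map hX.aemeasurable hFcont.aestronglyMeasurable]
    rw [h1]
    have h2 : ∫ x, cdf' μ X x ∂ν = ∫ x, (ν (Iic x)).toReal ∂ν := by
      exact integral_congr_ae (Filter.Eventually.of_forall fun x => hFa x)
    rw [h2, hLhdef]
    exact integral_toReal (meas_a ν).aemeasurable
      (Filter.Eventually.of_forall fun x => measure_lt_top ν _)
  have hHalfval : Lh.toReal = 2⁻¹ := by
    have := congrArg ENNReal.toReal hLh
    rw [ENNReal.toReal_add hLhfin hLhfin, ENNReal.toReal_one] at this
    linarith
  have hI : ∫ z in Ioi (0:ℝ), cdf' μ X z * (1 - cdf' μ X z) = P.toReal := by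
    have hpt : ∀ z : ℝ, cdf' μ X z * (1 - cdf' μ X z)
        = ((1 - ν (Iic z)) * ν (Iic z)).toReal := by
      intro z
      rw [ENNReal.toReal_mul, ENNReal.toReal_sub_of_le prob_le_one ENNReal.one_ne_top,
        ENNReal.toReal_one, hFa, mul_comm]
    rw [integral_congr_ae (Filter.Eventually.of_forall hpt), hPdef]
    exact integral_toReal
      (((measurable_const.sub (meas_a ν)).mul (meas_a ν)).aemeasurable)
      (Filter.Eventually.of_forall fun z => lt_of_le_of_lt
        (mul_le_one' tsub_le_self prob_le_one) ENNReal.one_lt_top)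
  -- final algebra
  set e := Lb.toReal with hedef
  set m := La.toReal with hmdef
  set d := Lc.toReal with hddef
  set p := P.toReal with hpdef
  have he : 0 < e := by rw [← hE] at *; exact hpos
  have h2m : m + m = e + p := by
    have := congrArg ENNReal.toReal hkey
    rwa [ENNReal.toReal_add hLafin hLafin, ENNReal.toReal_add hLbfin hPfin] at this
  have hd2 : d = p + p := by
    have := congrArg ENNReal.toReal hLcP
    rwa [ENNReal.toReal_add hPfin hPfin] at this
  constructor
  · rw [hM, hE, hD, hHalf, hHalfval]
    rw [show 2 * (m - e * 2⁻¹) = p by linarith]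
    rw [show d = 2 * p by linarith]
    rw [mul_div_mul_left p e (two_ne_zero)]
  · rw [hD, hE, hI]
    rw [show d = 2 * p by linarith]
    rw [mul_div_mul_left p e (two_ne_zero)]
end

section
/- Let Z be uniform on (0,1), 0 < q < 1/(2π), and set X = Z + q·cos(2πZ) and m(Z) = Z. Then X is strictly increasing in Z with values in (0, 1+q), E[X] = 1/2, and E[(m(Z) − X)·F_X(X)] = E[−q·cos(2πZ)·Z] = 0; hence the ABC statistics vanishes although X ≠ m(Z) (X is not mean-calibrated). -/
open MeasureTheory ProbabilityTheory Real

lemma intCos : ∫ x in (0:ℝ)..1, Real.cos (2*π*x) = 0 := by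
  have h : ∀ x : ℝ, HasDerivAt (fun y => Real.sin (2*π*y) / (2*π)) (Real.cos (2*π*x)) x := by
    intro x
    have h1 : HasDerivAt (fun y : ℝ => 2*π*y) (2*π) x := by
      simpa using (hasDerivAt_id x).const_mul (2*π)
    have := (h1.sin).div_const (2*π)
    refine this.congr_deriv ?_
    have : (2:ℝ)*π ≠ 0 := by positivity
    field_simp
  rw [intervalIntegral.integral_eq_sub_of_hasDerivAt (fun x _ => h x)
    ((Real.continuous_cos.comp (by continuity)).intervalIntegrable 0 1)]
  norm_num

lemma intXCos : ∫ x in (0:ℝ)..1, x * Real.cos (2*π*x) = 0 := by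
  have h : ∀ x : ℝ, HasDerivAt (fun y => y * Real.sin (2*π*y) / (2*π) + Real.cos (2*π*y) / (4*π^2)) (x * Real.cos (2*π*x)) x := by
    intro x
    have h1 : HasDerivAt (fun y : ℝ => 2*π*y) (2*π) x := by
      simpa using (hasDerivAt_id x).const_mul (2*π)
    have h2 := ((hasDerivAt_id x).mul h1.sin).div_const (2*π)
    have h3 := h1.cos.div_const (4*π^2)
    have := h2.add h3
    refine this.congr_deriv ?_
    have hπ : π ≠ 0 := Real.pi_ne_zero
    simp only [id]
    field_simp
    ring
  rw [intervalIntegral.integral_eq_sub_of_hasDerivAt (fun x _ => h x)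
    ((continuous_id.mul (Real.continuous_cos.comp (by continuity))).intervalIntegrable 0 1)]
  norm_num [Real.sin_two_pi, Real.cos_two_pi]

/-- with `Z ~ Unif(0,1)`, `0 < q < 1/(2π)` and
`X = Z + q·cos(2πZ)`, the map is strictly increasing with values in `(0, 1+q)`,
`E[X] = 1/2`, the ABC statistics vanishes
(`E[(Z − X)·F_X(X)] = E[−q·cos(2πZ)·Z] = 0`), yet `X` is not mean-calibrated
(`X ≠ Z` a.s.). -/
theorem abc_zero_without_calibration_example
    {Ω : Type*} {m0 : MeasurableSpace Ω} (μ : Measure Ω) [IsProbabilityMeasure μ]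
    (Z X : Ω → ℝ) (hZ : Measurable Z)
    (hmap : μ.map Z = volume.restrict (Set.Ioo (0:ℝ) 1))
    (q : ℝ) (hq0 : 0 < q) (hq1 : q < 1 / (2 * π))
    (hXdef : ∀ ω, X ω = Z ω + q * Real.cos (2 * π * Z ω)) :
    StrictMonoOn (fun z : ℝ => z + q * Real.cos (2 * π * z)) (Set.Ioo 0 1)
    ∧ (∀ z ∈ Set.Ioo (0:ℝ) 1,
        z + q * Real.cos (2 * π * z) ∈ Set.Ioo (0:ℝ) (1 + q))
    ∧ (∫ ω, X ω ∂μ) = 1 / 2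
    ∧ (∫ ω, (Z ω - X ω) * cdf' μ X (X ω) ∂μ) = 0
    ∧ (∫ ω, (-q * Real.cos (2 * π * Z ω)) * Z ω ∂μ) = 0
    ∧ ¬ (X =ᵐ[μ] Z) := by
  have hπ : (0:ℝ) < π := Real.pi_pos
  set f : ℝ → ℝ := fun z => z + q * Real.cos (2 * π * z) with hf
  -- strict monotonicity on all of ℝ
  have hderiv : ∀ x : ℝ, HasDerivAt f (1 + q * (-Real.sin (2*π*x) * (2*π))) x := by
    intro x
    have h1 : HasDerivAt (fun y : ℝ => 2*π*y) (2*π) x := by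
      simpa using (hasDerivAt_id x).const_mul (2*π)
    exact (hasDerivAt_id x).add (h1.cos.const_mul q)
  have hpos : ∀ x : ℝ, 0 < 1 + q * (-Real.sin (2*π*x) * (2*π)) := by
    intro x
    have h2 : q * (2*π) < 1 := by
      rw [div_eq_inv_mul] at hq1
      calc q * (2*π) < (2*π)⁻¹ * 1 * (2*π) := by
            apply mul_lt_mul_of_pos_right _ (by positivity)
            simpa using hq1
        _ = 1 := by field_simp
    have h3 : |q * (-Real.sin (2*π*x) * (2*π))| ≤ q * (2*π) := by
      rw [abs_mul, abs_of_pos hq0, abs_mul, abs_neg, abs_of_pos (by positivity : (0:ℝ) < 2*π)]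
      have h4 : |Real.sin (2*π*x)| ≤ 1 := Real.abs_sin_le_one _
      nlinarith [mul_nonneg hq0.le (mul_nonneg (sub_nonneg.mpr h4) (le_of_lt (by positivity : (0:ℝ) < 2*π)))]
    linarith [(abs_le.mp h3).1]
  have hmono : StrictMono f := by
    apply strictMono_of_deriv_pos
    intro x
    rw [(hderiv x).deriv]
    exact hpos x
  have hfc : Continuous f := by
    apply continuous_id.add
    exact continuous_const.mul (Real.continuous_cos.comp (by continuity))
  -- transfer of integrals
  have key : ∀ g : ℝ → ℝ, Continuous g → ∫ ω, g (Z ω) ∂μ = ∫ x in (0:ℝ)..1, g x := by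
    intro g hg
    rw [← integral_map hZ.aemeasurable hg.aestronglyMeasurable, hmap,
      ← MeasureTheory.integral_Ioc_eq_integral_Ioo,
      ← intervalIntegral.integral_of_le zero_le_one]
  -- part 5
  have h5 : (∫ ω, (-q * Real.cos (2 * π * Z ω)) * Z ω ∂μ) = 0 := by
    have := key (fun x => (-q * Real.cos (2*π*x)) * x)
      (by exact (continuous_const.mul (Real.continuous_cos.comp (by continuity))).mul continuous_id)
    rw [this]
    have heq : (fun x : ℝ => (-q * Real.cos (2*π*x)) * x) = fun x => -q * (x * Real.cos (2*π*x)) := by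
      funext x; ring
    rw [heq, intervalIntegral.integral_const_mul, intXCos, mul_zero]
  -- E[X]
  have h3 : (∫ ω, X ω ∂μ) = 1 / 2 := by
    have hXfun : (fun ω => X ω) = fun ω => f (Z ω) := funext hXdef
    rw [show (∫ ω, X ω ∂μ) = ∫ ω, f (Z ω) ∂μ from by rw [← hXfun], key f hfc]
    have hcc : Continuous fun x : ℝ => q * Real.cos (2*π*x) :=
      continuous_const.mul (Real.continuous_cos.comp (by continuity))
    rw [show (∫ x in (0:ℝ)..1, f x) = (∫ x in (0:ℝ)..1, x) + ∫ x in (0:ℝ)..1, q * Real.cos (2*π*x) from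
      intervalIntegral.integral_add (continuous_id.intervalIntegrable 0 1) (hcc.intervalIntegrable 0 1),
      integral_id, intervalIntegral.integral_const_mul, intCos]
    norm_num
  -- a.e. Z in Ioo
  have hZae : ∀ᵐ ω ∂μ, Z ω ∈ Set.Ioo (0:ℝ) 1 := by
    apply (ae_map_iff hZ.aemeasurable measurableSet_Ioo).mp
    rw [hmap]; exact ae_restrict_mem measurableSet_Ioo
  -- cdf evaluation
  have hcdf : ∀ ω, Z ω ∈ Set.Ioo (0:ℝ) 1 → cdf' μ X (X ω) = Z ω := by
    intro ω hω
    have hset : {ω' | X ω' ≤ X ω} = Z ⁻¹' Set.Iic (Z ω) := by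
      ext ω'
      simp only [Set.mem_setOf_eq, hXdef, Set.mem_preimage, Set.mem_Iic]
      exact hmono.le_iff_le
    unfold cdf'
    rw [hset, ← Measure.map_apply hZ measurableSet_Iic, hmap,
      Measure.restrict_apply measurableSet_Iic]
    have hI : Set.Iic (Z ω) ∩ Set.Ioo 0 1 = Set.Ioc 0 (Z ω) := by
      ext x
      simp only [Set.mem_inter_iff, Set.mem_Iic, Set.mem_Ioo, Set.mem_Ioc]
      constructor
      · rintro ⟨h1, h2, h3⟩; exact ⟨h2, h1⟩
      · rintro ⟨h1, h2⟩; exact ⟨h2, h1, lt_of_le_of_lt h2 hω.2⟩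
    rw [hI, Real.volume_Ioc]
    rw [ENNReal.toReal_ofReal (by linarith [hω.1])]
    ring
  -- part 4
  have h4 : (∫ ω, (Z ω - X ω) * cdf' μ X (X ω) ∂μ) = 0 := by
    have hae : (fun ω => (Z ω - X ω) * cdf' μ X (X ω)) =ᵐ[μ]
        fun ω => (-q * Real.cos (2 * π * Z ω)) * Z ω := by
      filter_upwards [hZae] with ω hω
      rw [hcdf ω hω, hXdef ω]; ring
    rw [integral_congr_ae hae]; exact h5
  -- part 6
  have h6 : ¬ (X =ᵐ[μ] Z) := by
    intro h
    have hc : ∀ᵐ ω ∂μ, Z ω ∈ {x : ℝ | Real.cos (2*π*x) = 0} := by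
      filter_upwards [h] with ω hω
      have hx := hXdef ω
      have : q * Real.cos (2*π*Z ω) = 0 := by rw [hω] at hx; linarith
      exact (mul_eq_zero.mp this).resolve_left hq0.ne'
    have hs : MeasurableSet {x : ℝ | Real.cos (2*π*x) = 0} :=
      ((Real.continuous_cos.comp (by continuity : Continuous fun x : ℝ => 2*π*x)).measurable)
        (measurableSet_singleton 0)
    have hmapc : ∀ᵐ x ∂(μ.map Z), x ∈ {x : ℝ | Real.cos (2*π*x) = 0} :=
      (ae_map_iff hZ.aemeasurable hs).mpr hc
    rw [hmap] at hmapc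
    have h0 : (volume.restrict (Set.Ioo (0:ℝ) 1)) {x : ℝ | ¬ Real.cos (2*π*x) = 0} = 0 := by
      have h' := hmapc
      rw [ae_iff] at h'
      simpa using h'
    have hsub : Set.Ioo (0:ℝ) (1/8) ⊆ {x : ℝ | ¬ Real.cos (2*π*x) = 0} := by
      intro x hx
      have hcpos : 0 < Real.cos (2*π*x) := by
        apply Real.cos_pos_of_mem_Ioo
        constructor
        · nlinarith [hx.1, hπ]
        · nlinarith [hx.2, hπ]
      exact hcpos.ne'
    have hzero : (volume.restrict (Set.Ioo (0:ℝ) 1)) (Set.Ioo (0:ℝ) (1/8)) = 0 :=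
      le_antisymm (h0 ▸ measure_mono hsub) zero_le
    rw [Measure.restrict_apply measurableSet_Ioo] at hzero
    have hinter : Set.Ioo (0:ℝ) (1/8) ∩ Set.Ioo 0 1 = Set.Ioo (0:ℝ) (1/8) := by
      apply Set.inter_eq_left.mpr
      intro x hx
      exact ⟨hx.1, by linarith [hx.2]⟩
    rw [hinter, Real.volume_Ioo] at hzero
    rw [ENNReal.ofReal_eq_zero] at hzero
    norm_num at hzero
  -- ranges
  have h2 : ∀ z ∈ Set.Ioo (0:ℝ) 1, z + q * Real.cos (2 * π * z) ∈ Set.Ioo (0:ℝ) (1 + q) := by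
    intro z hz
    have e0 : f 0 = q := by simp [hf]
    have e1 : f 1 = 1 + q := by
      show (1:ℝ) + q * Real.cos (2*π*1) = 1 + q
      rw [mul_one, Real.cos_two_pi, mul_one]
    constructor
    · have h' := hmono hz.1
      rw [e0] at h'
      calc (0:ℝ) < q := hq0
        _ < f z := h'
    · have h' := hmono hz.2
      rw [e1] at h'
      exact h'
  exact ⟨hmono.strictMonoOn _, h2, h3, h4, h5, h6⟩
end

section
/- Let Y be Bernoulli with success probability π₁ = E[Y] ∈ (0,1), π₀ = 1 − π₁, and let X be a mean-calibrated predictor (E[Y|X]=X a.s.) supported on (0,1) with continuous cdf F_X. Then with H = F_X, the expected loss S = ∫₀^∞ E[L_θ(Y,X)] dF_X(θ) satisfies S = −π₁·Gini(X) + π₀π₁, where Gini(X) = E[|X−X'|]/(2E[X]) and X' is an independent copy of X. -/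
open MeasureTheory ProbabilityTheory

/-- The elementary Bregman loss. -/
noncomputable def elemLoss (θ y x : ℝ) : ℝ :=
  max (y - θ) 0 - max (x - θ) 0 - (if θ < x then y - x else 0)

lemma max_add_max_neg (a : ℝ) : max a 0 + max (-a) 0 = |a| := by
  rcases le_total 0 a with h | h
  · rw [max_eq_left h, max_eq_right (by linarith), abs_of_nonneg h]; ring
  · rw [max_eq_right h, max_eq_left (by linarith), abs_of_nonpos h]; ring

set_option maxHeartbeats 1000000 in
/-- for a Bernoulli response `Y` with success probability
`π₁ = E[Y] ∈ (0,1)` and a mean-calibrated predictor `X` supported on `(0,1)` with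
continuous cdf, the Bregman score with `H = F_X` satisfies
`S = −π₁·Gini(X) + π₀·π₁` where `Gini(X) = E[|X−X'|]/(2E[X])`. -/
theorem bernoulli_score_gini
    {Ω : Type*} {m0 : MeasurableSpace Ω} (μ : Measure Ω) [IsProbabilityMeasure μ]
    (Y X X' : Ω → ℝ) (hX : Measurable X) (hX' : Measurable X')
    (hY : Integrable Y μ)
    (hYber : ∀ᵐ ω ∂μ, Y ω = 0 ∨ Y ω = 1)
    (hπ₁pos : 0 < ∫ ω, Y ω ∂μ) (hπ₁lt : (∫ ω, Y ω ∂μ) < 1)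
    (hXrange : ∀ᵐ ω ∂μ, X ω ∈ Set.Ioo (0:ℝ) 1)
    (hcal : μ[Y | MeasurableSpace.comap X Real.measurableSpace] =ᵐ[μ] X)
    (hmean : ∫ ω, X ω ∂μ = ∫ ω, Y ω ∂μ)
    (hFcont : Continuous (cdf' μ X))
    (hcopy : IdentDistrib X' X μ μ) (hindep : IndepFun X X' μ)
    (hintabs : Integrable (fun ω => |X ω - X' ω|) μ)
    (hintM : Integrable (fun θ => ∫ ω, elemLoss θ (Y ω) (X ω) ∂μ) (μ.map X)) :
    ∫ θ, (∫ ω, elemLoss θ (Y ω) (X ω) ∂μ) ∂(μ.map X)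
      = -(∫ ω, Y ω ∂μ) * ((∫ ω, |X ω - X' ω| ∂μ) / (2 * ∫ ω, X ω ∂μ))
        + (1 - ∫ ω, Y ω ∂μ) * (∫ ω, Y ω ∂μ) := by
  set π₁ : ℝ := ∫ ω, Y ω ∂μ with hπ₁def
  have hXint : Integrable X μ := by
    refine Integrable.mono' (integrable_const 1) hX.aestronglyMeasurable ?_
    filter_upwards [hXrange] with ω hω
    rw [Real.norm_eq_abs, abs_of_pos hω.1]; exact hω.2.le
  set ν : Measure ℝ := μ.map X with hνdef
  have hm : MeasurableSpace.comap X Real.measurableSpace ≤ m0 := hX.comap_le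
  set f₁ : ℝ → ℝ := fun θ => π₁ * max (1 - θ) 0 + (1 - π₁) * max (-θ) 0 with hf₁def
  set g : ℝ → ℝ := fun θ => ∫ ω, max (X ω - θ) 0 ∂μ with hgdef
  -- the inner integral
  have key : ∀ θ : ℝ, ∫ ω, elemLoss θ (Y ω) (X ω) ∂μ = f₁ θ - g θ := by
    intro θ
    have hAeq : (fun ω => max (Y ω - θ) 0)
        =ᵐ[μ] fun ω => Y ω * (max (1 - θ) 0 - max (-θ) 0) + max (-θ) 0 := by
      filter_upwards [hYber] with ω h
      rcases h with h | h
      · simp [h]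
      · simp [h]
    have hI1' : Integrable
        (fun ω => Y ω * (max (1 - θ) 0 - max (-θ) 0) + max (-θ) 0) μ :=
      (hY.mul_const _).add (integrable_const _)
    have hI1 : Integrable (fun ω => max (Y ω - θ) 0) μ := hI1'.congr hAeq.symm
    have hI2 : Integrable (fun ω => max (X ω - θ) 0) μ := by
      refine Integrable.mono' (integrable_const (1 + |θ|))
        (((hX.sub measurable_const).max measurable_const).aestronglyMeasurable) ?_
      filter_upwards [hXrange] with ω hω
      rw [Real.norm_eq_abs, abs_of_nonneg (le_max_right _ _)]
      have h1 : X ω - θ ≤ |X ω| + |θ| :=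
        (le_abs_self _).trans (abs_sub _ _)
      have hx1 : |X ω| ≤ 1 := by rw [abs_of_pos hω.1]; exact hω.2.le
      refine max_le (by linarith) (by positivity)
    have hsmeas : MeasurableSet {ω | θ < X ω} := hX measurableSet_Ioi
    have hI3 : Integrable (fun ω => if θ < X ω then Y ω - X ω else 0) μ := by
      have heq : (fun ω => if θ < X ω then Y ω - X ω else 0)
          = Set.indicator {ω | θ < X ω} (fun ω => Y ω - X ω) := by
        funext ω; simp [Set.indicator_apply, Set.mem_setOf_eq]
      rw [heq]
      exact (hY.sub hXint).indicator hsmeas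
    have hI12 : Integrable (fun ω => max (Y ω - θ) 0 - max (X ω - θ) 0) μ :=
      hI1.sub hI2
    have hsplit : ∫ ω, elemLoss θ (Y ω) (X ω) ∂μ
        = (∫ ω, max (Y ω - θ) 0 ∂μ) - (∫ ω, max (X ω - θ) 0 ∂μ)
          - ∫ ω, (if θ < X ω then Y ω - X ω else 0) ∂μ := by
      simp only [elemLoss]
      rw [integral_sub hI12 hI3, integral_sub hI1 hI2]
    -- the calibration term vanishes
    have hzero : ∫ ω, (if θ < X ω then Y ω - X ω else 0) ∂μ = 0 := by
      have h1 : ∫ ω, (if θ < X ω then Y ω - X ω else 0) ∂μ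
          = ∫ ω in {ω | θ < X ω}, (Y ω - X ω) ∂μ := by
        rw [← integral_indicator hsmeas]
        congr 1
      have hs : MeasurableSet[MeasurableSpace.comap X Real.measurableSpace]
          {ω | θ < X ω} := ⟨Set.Ioi θ, measurableSet_Ioi, rfl⟩
      have h2 : ∫ ω in {ω | θ < X ω}, Y ω ∂μ = ∫ ω in {ω | θ < X ω}, X ω ∂μ := by
        rw [← setIntegral_condExp hm hY hs]
        exact integral_congr_ae (ae_restrict_of_ae hcal)
      rw [h1, integral_sub hY.integrableOn hXint.integrableOn, h2, sub_self]
    have hfirst : ∫ ω, max (Y ω - θ) 0 ∂μ = f₁ θ := by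
      rw [integral_congr_ae hAeq, integral_add (hY.mul_const _) (integrable_const _),
        integral_mul_const, integral_const]
      simp only [hf₁def, probReal_univ, measure_univ, ENNReal.toReal_one, one_smul, smul_eq_mul]
      ring
    rw [hsplit, hzero, hfirst, hgdef, sub_zero]
  have hfun : (fun θ => ∫ ω, elemLoss θ (Y ω) (X ω) ∂μ) = fun θ => f₁ θ - g θ :=
    funext key
  rw [hfun] at hintM ⊢
  have hprob : IsProbabilityMeasure ν := by
    rw [hνdef]; exact Measure.isProbabilityMeasure_map hX.aemeasurable
  have hrange' : ∀ᵐ θ ∂ν, θ ∈ Set.Ioo (0:ℝ) 1 := by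
    rw [hνdef]
    exact (ae_map_iff hX.aemeasurable measurableSet_Ioo).mpr hXrange
  have hf₁cont : Continuous f₁ :=
    (continuous_const.mul ((continuous_const.sub continuous_id).max
        continuous_const)).add
      (continuous_const.mul (continuous_neg.max continuous_const))
  have hf₁int : Integrable f₁ ν := by
    refine Integrable.mono' (integrable_const 1) hf₁cont.aestronglyMeasurable ?_
    filter_upwards [hrange'] with θ hθ
    have h1 : max (1 - θ) 0 = 1 - θ := max_eq_left (by linarith [hθ.2])
    have h2 : max (-θ) 0 = 0 := max_eq_right (by linarith [hθ.1])
    rw [Real.norm_eq_abs, hf₁def]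
    simp only [h1, h2, mul_zero, add_zero]
    rw [abs_of_nonneg (by nlinarith [hθ.1, hθ.2, hπ₁pos, hπ₁lt])]
    nlinarith [hθ.1, hθ.2, hπ₁pos, hπ₁lt]
  have hgint : Integrable g ν := by
    have h2 := hf₁int.sub hintM
    refine h2.congr (Filter.Eventually.of_forall fun θ => ?_)
    simp only [Pi.sub_apply]
    ring
  rw [integral_sub hf₁int hgint]
  -- compute ∫ f₁
  have hA : ∫ θ, f₁ θ ∂ν = π₁ * (1 - π₁) := by
    rw [hνdef, integral_map hX.aemeasurable hf₁cont.aestronglyMeasurable]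
    have heq : (fun ω => f₁ (X ω)) =ᵐ[μ] fun ω => π₁ * (1 - X ω) := by
      filter_upwards [hXrange] with ω hω
      rw [hf₁def]
      simp only
      rw [max_eq_left (by linarith [hω.2]), max_eq_right (by linarith [hω.1])]
      ring
    rw [integral_congr_ae heq, integral_const_mul,
      integral_sub (integrable_const 1) hXint, hmean, integral_const]
    simp only [probReal_univ, measure_univ, ENNReal.toReal_one, smul_eq_mul, mul_one]
  -- compute ∫ g via the independent copy
  have hpaircont : Continuous fun p : ℝ × ℝ => max (p.1 - p.2) 0 :=
    (continuous_fst.sub continuous_snd).max continuous_const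
  have habscont : Continuous fun p : ℝ × ℝ => |p.1 - p.2| :=
    (continuous_fst.sub continuous_snd).abs
  have hpairmeas : AEMeasurable (fun ω => (X ω, X' ω)) μ :=
    (hX.prodMk hX').aemeasurable
  have hpair : μ.map (fun ω => (X ω, X' ω)) = ν.prod ν := by
    rw [hνdef,
      (indepFun_iff_map_prod_eq_prod_map_map hX.aemeasurable hX'.aemeasurable).mp
        hindep, hcopy.map_eq]
  have hψ : Integrable (fun p : ℝ × ℝ => |p.1 - p.2|) (ν.prod ν) := by
    rw [← hpair]
    exact (integrable_map_measure habscont.aestronglyMeasurable hpairmeas).mpr hintabs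
  have hφ : Integrable (fun p : ℝ × ℝ => max (p.1 - p.2) 0) (ν.prod ν) := by
    refine hψ.mono' hpaircont.aestronglyMeasurable ?_
    refine Filter.Eventually.of_forall fun p => ?_
    rw [Real.norm_eq_abs, abs_of_nonneg (le_max_right _ _)]
    exact max_le (le_abs_self _) (abs_nonneg _)
  have hB : ∫ θ, g θ ∂ν = ∫ p, max (p.1 - p.2) 0 ∂(ν.prod ν) := by
    rw [integral_prod_symm _ hφ]
    refine integral_congr_ae (Filter.Eventually.of_forall fun θ => ?_)
    rw [hgdef]
    simp only
    rw [hνdef, integral_map hX.aemeasurable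
      (((continuous_sub_right θ).max continuous_const).aestronglyMeasurable)]
  have hswap : ∫ p, max (p.1 - p.2) 0 ∂(ν.prod ν)
      = ∫ p, max (p.2 - p.1) 0 ∂(ν.prod ν) := by
    have h1 : ∫ p, max (p.2 - p.1) 0 ∂(ν.prod ν)
        = ∫ p, max (p.1 - p.2) 0 ∂((ν.prod ν).map Prod.swap) := by
      rw [integral_map measurable_swap.aemeasurable]
      · rfl
      · rw [Measure.prod_swap]; exact hpaircont.aestronglyMeasurable
    rw [h1, Measure.prod_swap]
  have hψval : ∫ p, |p.1 - p.2| ∂(ν.prod ν) = ∫ ω, |X ω - X' ω| ∂μ := by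
    rw [← hpair, integral_map hpairmeas habscont.aestronglyMeasurable]
  have hφswap : Integrable (fun p : ℝ × ℝ => max (p.2 - p.1) 0) (ν.prod ν) := by
    refine hψ.mono'
      ((continuous_snd.sub continuous_fst).max continuous_const).aestronglyMeasurable ?_
    refine Filter.Eventually.of_forall fun p => ?_
    rw [Real.norm_eq_abs, abs_of_nonneg (le_max_right _ _), abs_sub_comm]
    exact max_le (le_abs_self _) (abs_nonneg _)
  have hhalf : ∫ p, max (p.1 - p.2) 0 ∂(ν.prod ν)
      = (∫ ω, |X ω - X' ω| ∂μ) / 2 := by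
    have hsum : (∫ p, max (p.1 - p.2) 0 ∂(ν.prod ν))
        + ∫ p, max (p.2 - p.1) 0 ∂(ν.prod ν) = ∫ ω, |X ω - X' ω| ∂μ := by
      rw [← integral_add hφ hφswap, ← hψval]
      refine integral_congr_ae (Filter.Eventually.of_forall fun p => ?_)
      have h := max_add_max_neg (p.1 - p.2)
      simpa [neg_sub] using h
    rw [← hswap] at hsum
    linarith
  rw [hA, hB, hhalf, hmean]
  have hne : π₁ ≠ 0 := ne_of_gt hπ₁pos
  field_simp
  ring
end

section
/- Let X be a nonnegative mean-calibrated predictor of Y with E[X]=E[Y]>0, and let X' be an independent copy of X. Then with H = F_X (assumed continuous), the Bregman score S = ∫₀^∞ E[(Y−θ)⁺ − (X−θ)⁺] dF_X(θ) satisfies E[Y]·Gini(X) = E[(Y−X')⁺] − S, where Gini(X) = E[|X−X''|]/(2E[X]) with X'' an independent copy of X, and X' is independent of (Y,X). -/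
open MeasureTheory ProbabilityTheory

lemma indep_integral_eq {Ω : Type*} {m0 : MeasurableSpace Ω} (μ : Measure Ω)
    [IsProbabilityMeasure μ]
    (U V : Ω → ℝ) (hU : AEMeasurable U μ) (hV : AEMeasurable V μ)
    (hUV : IndepFun U V μ) (g : ℝ × ℝ → ℝ) (hg : Measurable g)
    (hint : Integrable (fun ω => g (U ω, V ω)) μ) :
    ∫ ω, g (U ω, V ω) ∂μ = ∫ v, ∫ u, g (u, v) ∂(μ.map U) ∂(μ.map V) := by
  have hmap : μ.map (fun ω => (U ω, V ω)) = (μ.map U).prod (μ.map V) :=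
    (indepFun_iff_map_prod_eq_prod_map_map hU hV).mp hUV
  have hpair : AEMeasurable (fun ω => (U ω, V ω)) μ := hU.prodMk hV
  have h1 : ∫ ω, g (U ω, V ω) ∂μ = ∫ p, g p ∂(μ.map fun ω => (U ω, V ω)) :=
    (integral_map hpair hg.aestronglyMeasurable).symm
  have hgint : Integrable g ((μ.map U).prod (μ.map V)) := by
    rw [← hmap]
    exact (integrable_map_measure hg.aestronglyMeasurable hpair).mpr hint
  rw [h1, hmap]
  exact integral_prod_symm g hgint

/-- for a nonnegative mean-calibrated predictor `X` of `Y` with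
`E[X] = E[Y] > 0`, taking `H = F_X` in the Bregman score
`S = ∫₀^∞ E[(Y−θ)⁺ − (X−θ)⁺] dF_X(θ)` gives
`E[Y]·Gini(X) = E[(Y−X')⁺] − S`, where `Gini(X) = E[|X−X''|]/(2E[X])`,
`X'` is an independent copy of `X` independent of `(Y,X)` and `X''` an
independent copy of `X`. -/
theorem gini_bregman_representation
    {Ω : Type*} {m0 : MeasurableSpace Ω} (μ : Measure Ω) [IsProbabilityMeasure μ]
    (Y X X' X'' : Ω → ℝ) (hX : Measurable X) (hX' : Measurable X')
    (hX'' : Measurable X'')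
    (hY : Integrable Y μ) (hXint : Integrable X μ)
    (hY0 : 0 ≤ᵐ[μ] Y) (hX0 : 0 ≤ᵐ[μ] X)
    (hcal : μ[Y | MeasurableSpace.comap X Real.measurableSpace] =ᵐ[μ] X)
    (hmean : ∫ ω, X ω ∂μ = ∫ ω, Y ω ∂μ) (hpos : 0 < ∫ ω, Y ω ∂μ)
    (hFcont : Continuous (cdf' μ X))
    (hid' : IdentDistrib X' X μ μ) (hid'' : IdentDistrib X'' X μ μ)
    (hindep' : IndepFun (fun ω => (Y ω, X ω)) X' μ)
    (hindep'' : IndepFun X X'' μ)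
    (hintabs : Integrable (fun ω => |X ω - X'' ω|) μ)
    (hintpos : Integrable (fun ω => max (Y ω - X' ω) 0) μ)
    (hintM : Integrable
      (fun θ => ∫ ω, (max (Y ω - θ) 0 - max (X ω - θ) 0) ∂μ) (μ.map X)) :
    (∫ ω, Y ω ∂μ) * ((∫ ω, |X ω - X'' ω| ∂μ) / (2 * ∫ ω, X ω ∂μ))
      = (∫ ω, max (Y ω - X' ω) 0 ∂μ)
        - ∫ θ, (∫ ω, (max (Y ω - θ) 0 - max (X ω - θ) 0) ∂μ) ∂(μ.map X) := by
  -- notation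
  set P := μ.map X with hP
  have hYm : AEMeasurable Y μ := hY.aemeasurable
  have hmapX' : μ.map X' = P := hid'.map_eq
  have hmapX'' : μ.map X'' = P := hid''.map_eq
  have habs_max : ∀ a : ℝ, |max a 0| ≤ |a| := by
    intro a
    rw [abs_of_nonneg (le_max_right _ _)]
    exact max_le (le_abs_self _) (abs_nonneg _)
  -- the measurable positive-part kernel
  have hgmeas : Measurable (fun p : ℝ × ℝ => max (p.1 - p.2) 0) :=
    (measurable_fst.sub measurable_snd).max measurable_const
  -- pointwise integrability in θ
  have intY : ∀ θ : ℝ, Integrable (fun ω => max (Y ω - θ) 0) μ := by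
    intro θ
    refine (hY.sub (integrable_const θ)).abs.mono'
      ((hY.aemeasurable.sub aemeasurable_const).max
        aemeasurable_const).aestronglyMeasurable ?_
    filter_upwards with ω
    simpa [Real.norm_eq_abs, abs_abs] using habs_max (Y ω - θ)
  have intX : ∀ θ : ℝ, Integrable (fun ω => max (X ω - θ) 0) μ := by
    intro θ
    refine (hXint.sub (integrable_const θ)).abs.mono'
      ((hX.sub measurable_const).max measurable_const).aestronglyMeasurable ?_
    filter_upwards with ω
    simpa [Real.norm_eq_abs, abs_abs] using habs_max (X ω - θ)
  set A : ℝ → ℝ := fun θ => ∫ ω, max (Y ω - θ) 0 ∂μ with hA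
  set B : ℝ → ℝ := fun θ => ∫ ω, max (X ω - θ) 0 ∂μ with hB
  have hsplit : ∀ θ : ℝ, ∫ ω, (max (Y ω - θ) 0 - max (X ω - θ) 0) ∂μ = A θ - B θ :=
    fun θ => integral_sub (intY θ) (intX θ)
  -- key identity 1 : ∫ A dP = E[(Y-X')⁺]
  have hYX' : IndepFun Y X' μ := by
    have := hindep'.comp (measurable_fst : Measurable (Prod.fst : ℝ × ℝ → ℝ))
      (measurable_id : Measurable (id : ℝ → ℝ))
    exact this
  have hEA : ∫ ω, max (Y ω - X' ω) 0 ∂μ = ∫ θ, A θ ∂P := by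
    have h := indep_integral_eq μ Y X' hYm hX'.aemeasurable hYX'
      (fun p => max (p.1 - p.2) 0) hgmeas hintpos
    rw [h, hmapX']
    refine integral_congr_ae (Filter.Eventually.of_forall fun θ => ?_)
    simp only [hA]
    exact integral_map hYm ((measurable_id.sub measurable_const).max
      measurable_const).aestronglyMeasurable
  -- key identity 2 : E[(X-X'')⁺] = ∫ B dP
  have intXX'' : Integrable (fun ω => max (X ω - X'' ω) 0) μ := by
    refine hintabs.mono' ((hX.sub hX'').max measurable_const).aestronglyMeasurable ?_
    filter_upwards with ω
    simpa [Real.norm_eq_abs, abs_abs] using habs_max (X ω - X'' ω)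
  have intX''X : Integrable (fun ω => max (X'' ω - X ω) 0) μ := by
    refine hintabs.mono' ((hX''.sub hX).max measurable_const).aestronglyMeasurable ?_
    filter_upwards with ω
    have := habs_max (X'' ω - X ω)
    rw [abs_sub_comm (X'' ω) (X ω)] at this
    simpa [Real.norm_eq_abs, abs_abs] using this
  have hEB : ∫ ω, max (X ω - X'' ω) 0 ∂μ = ∫ θ, B θ ∂P := by
    have h := indep_integral_eq μ X X'' hX.aemeasurable hX''.aemeasurable hindep''
      (fun p => max (p.1 - p.2) 0) hgmeas intXX''
    rw [h, hmapX'']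
    refine integral_congr_ae (Filter.Eventually.of_forall fun θ => ?_)
    simp only [hB]
    exact integral_map hX.aemeasurable ((measurable_id.sub measurable_const).max
      measurable_const).aestronglyMeasurable
  -- symmetry : E[(X''-X)⁺] = E[(X-X'')⁺]
  have hsym : ∫ ω, max (X'' ω - X ω) 0 ∂μ = ∫ ω, max (X ω - X'' ω) 0 ∂μ := by
    have h1 := indep_integral_eq μ X X'' hX.aemeasurable hX''.aemeasurable hindep''
      (fun p => max (p.1 - p.2) 0) hgmeas intXX''
    have h2 := indep_integral_eq μ X'' X hX''.aemeasurable hX.aemeasurable hindep''.symm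
      (fun p => max (p.1 - p.2) 0) hgmeas intX''X
    rw [h1, h2, hmapX'']
  -- |X-X''| = (X-X'')⁺ + (X''-X)⁺
  have habs : ∫ ω, |X ω - X'' ω| ∂μ = 2 * ∫ ω, max (X ω - X'' ω) 0 ∂μ := by
    have hpt : ∀ ω, |X ω - X'' ω| = max (X ω - X'' ω) 0 + max (X'' ω - X ω) 0 := by
      intro ω
      have := max_zero_add_max_neg_zero_eq_abs_self (X ω - X'' ω)
      rw [neg_sub] at this
      linarith
    calc ∫ ω, |X ω - X'' ω| ∂μ
        = ∫ ω, (max (X ω - X'' ω) 0 + max (X'' ω - X ω) 0) ∂μ := by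
          exact integral_congr_ae (Filter.Eventually.of_forall hpt)
      _ = (∫ ω, max (X ω - X'' ω) 0 ∂μ) + ∫ ω, max (X'' ω - X ω) 0 ∂μ :=
          integral_add intXX'' intX''X
      _ = 2 * ∫ ω, max (X ω - X'' ω) 0 ∂μ := by rw [hsym]; ring
  -- integrability of B over P
  have hBanti : Antitone B := by
    intro θ₁ θ₂ h
    exact integral_mono (intX θ₂) (intX θ₁)
      (fun ω => max_le_max (sub_le_sub_left h _) le_rfl)
  have hidP : Integrable (fun θ : ℝ => θ) P := by
    have : Integrable (id ∘ X) μ := hXint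
    exact (integrable_map_measure aestronglyMeasurable_id hX.aemeasurable).mpr this
  haveI : IsProbabilityMeasure P := Measure.isProbabilityMeasure_map hX.aemeasurable
  have hBle : ∀ θ : ℝ, B θ ≤ (∫ ω, |X ω| ∂μ) + |θ| := by
    intro θ
    have h1 : B θ ≤ ∫ ω, (|X ω| + |θ|) ∂μ := by
      refine integral_mono (intX θ) (hXint.abs.add (integrable_const _)) fun ω => ?_
      have h2 : X ω - θ ≤ |X ω| + |θ| := by
        have := le_abs_self (X ω); have := neg_abs_le θ; linarith
      exact max_le h2 (by positivity)
    rwa [integral_add hXint.abs (integrable_const _), integral_const, probReal_univ,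
      one_smul] at h1
  have hBint : Integrable B P := by
    refine ((integrable_const (∫ ω, |X ω| ∂μ)).add hidP.abs).mono'
      hBanti.measurable.aestronglyMeasurable ?_
    filter_upwards with θ
    have h0 : 0 ≤ B θ := integral_nonneg fun ω => le_max_right _ _
    have h1 := hBle θ
    have h2 : (0:ℝ) ≤ (∫ ω, |X ω| ∂μ) + |θ| := le_trans h0 h1
    simpa [Real.norm_eq_abs, abs_of_nonneg h0, abs_of_nonneg h2] using h1
  -- integrability of A - B and A
  have hintM' : Integrable (fun θ => A θ - B θ) P := by
    have heq : (fun θ => ∫ ω, (max (Y ω - θ) 0 - max (X ω - θ) 0) ∂μ)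
        = fun θ => A θ - B θ := funext hsplit
    rw [← heq]; exact hintM
  -- the Bregman score equals ∫A - ∫B
  have hS : ∫ θ, (∫ ω, (max (Y ω - θ) 0 - max (X ω - θ) 0) ∂μ) ∂P
      = (∫ θ, A θ ∂P) - ∫ θ, B θ ∂P := by
    have heq : (fun θ => ∫ ω, (max (Y ω - θ) 0 - max (X ω - θ) 0) ∂μ)
        = fun θ => A θ - B θ := funext hsplit
    have hAint : Integrable A P := by
      have h := hintM'.add hBint
      have hAe : A = (fun θ => A θ - B θ) + B := by funext θ; simp
      rw [hAe]; exact h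
    rw [heq]
    exact integral_sub hAint hBint
  -- conclude
  have hXne : (∫ ω, X ω ∂μ) ≠ 0 := by rw [hmean]; exact hpos.ne'
  rw [hS, ← hEA, habs, ← hmean]
  have : (∫ θ, B θ ∂P) = ∫ ω, max (X ω - X'' ω) 0 ∂μ := hEB.symm
  rw [this]
  field_simp
  ring
end
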